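/- arXiv:2108.08299 — 2 statements merged into one kernel-verified Lean document; each statement's English description precedes it below -/
import Mathlib

section
/- For d ≥ 0, the bivariate generating function L_d(x,y) = Σ_P x^{ℓ(P)} y^{ρ(P)}, summed over all d-Dyck paths P (including the empty path), where ℓ is the semi-length and ρ the number of peaks, equals 1 + xy(1 − 2x + x² + xy − x^{d+1}y) / ((1−x)(1 − 2x + x² − x^{d+1}y)). -/
/-- Value of a step: `true` = up-step U, `false` = down-step D. -/
def stepVal (b : Bool) : ℤ := if b then 1 else -1

/-- Heights (y-coordinates) of all lattice points visited along the path,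
starting at 0. -/
def heights (p : List Bool) : List ℤ := p.scanl (fun h b => h + stepVal b) 0

/-- A Dyck path: equal numbers of up and down steps, never going below the x-axis. -/
def IsDyck (p : List Bool) : Prop :=
  p.count true = p.count false ∧ ∀ h ∈ heights p, 0 ≤ h

/-- Semi-length of a path: the number of up-steps. -/
def semilength (p : List Bool) : ℕ := p.count true

/-- Levels (y-coordinates of the local minima) of the valleys (DU factors),
read from left to right. -/
def valleyLevels (p : List Bool) : List ℤ :=
  ((p.zip p.tail).zip (heights p).tail).filterMap
    (fun x => if x.1.1 = false ∧ x.1.2 = true then some x.2 else none)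

/-- A path is restricted `d`-Dyck (on the valley condition) if consecutive
valley levels `ν_i, ν_{i+1}` satisfy `ν_{i+1} - ν_i ≥ d`. -/
def RestrictedD (d : ℤ) (p : List Bool) : Prop :=
  List.Chain' (fun a b => d ≤ b - a) (valleyLevels p)

/-- Number of peaks (UD factors) of a path. -/
def peaks (p : List Bool) : ℕ := (p.zip p.tail).countP (fun x => x.1 && !x.2)

/-- The area of a path: the sum of the y-coordinates of all lattice points on it. -/
def pathArea (p : List Bool) : ℤ := (heights p).sum

/-- `dDyckCount d n` = number of `d`-Dyck paths of semi-length `n`. -/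
noncomputable def dDyckCount (d : ℤ) (n : ℕ) : ℕ :=
  {p : List Bool | IsDyck p ∧ semilength p = n ∧ RestrictedD d p}.ncard

open MvPowerSeries

/-- The bivariate generating function `L_d(x,y) = Σ_P x^{ℓ(P)} y^{ρ(P)}` over all
`d`-Dyck paths `P` (including the empty path), where the variable `0` marks the
semi-length and the variable `1` marks the number of peaks. -/
noncomputable def Lbiv (d : ℤ) : MvPowerSeries (Fin 2) ℚ :=
  fun m => ({p : List Bool | IsDyck p ∧ RestrictedD d p ∧
    semilength p = m 0 ∧ peaks p = m 1}.ncard : ℚ)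

namespace DyckAux

/-- heights after each step, starting from height `h` -/
def hts' (h : ℤ) : List Bool → List ℤ
  | [] => []
  | b :: p => (h + stepVal b) :: hts' (h + stepVal b) p

def hend (h : ℤ) : List Bool → ℤ
  | [] => h
  | b :: p => hend (h + stepVal b) p

lemma scanl_eq (h : ℤ) (p : List Bool) : p.scanl (fun h b => h + stepVal b) h = h :: hts' h p := by
  induction p generalizing h with
  | nil => rfl
  | cons b p ih => rw [List.scanl_cons]; simp [hts', ih]

lemma heights_eq (p : List Bool) : heights p = 0 :: hts' 0 p := scanl_eq 0 p

lemma hts'_append (h : ℤ) (u v : List Bool) :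
    hts' h (u ++ v) = hts' h u ++ hts' (hend h u) v := by
  induction u generalizing h with
  | nil => rfl
  | cons b u ih => simp [hts', hend, ih]

lemma hend_append (h : ℤ) (u v : List Bool) : hend h (u ++ v) = hend (hend h u) v := by
  induction u generalizing h with
  | nil => rfl
  | cons b u ih => simp [hend, ih]

lemma hend_replicate_true (h : ℤ) (a : ℕ) : hend h (List.replicate a true) = h + a := by
  induction a generalizing h with
  | zero => simp [hend]
  | succ n ih => simp [List.replicate_succ, hend, ih, stepVal]; ring

lemma hend_replicate_false (h : ℤ) (a : ℕ) : hend h (List.replicate a false) = h - a := by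
  induction a generalizing h with
  | zero => simp [hend]
  | succ n ih => simp [List.replicate_succ, hend, ih, stepVal]; ring

lemma mem_hts'_replicate_true {x h : ℤ} {a : ℕ} (hx : x ∈ hts' h (List.replicate a true)) :
    h ≤ x := by
  induction a generalizing h with
  | zero => simp [hts'] at hx
  | succ n ih =>
    simp only [List.replicate_succ, hts', List.mem_cons] at hx
    rcases hx with rfl | hx
    · simp [stepVal]
    · have := ih hx; simp [stepVal] at this ⊢; omega

lemma mem_hts'_replicate_false {x h : ℤ} {a : ℕ} (hx : x ∈ hts' h (List.replicate a false)) :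
    h - a ≤ x := by
  induction a generalizing h with
  | zero => simp [hts'] at hx
  | succ n ih =>
    simp only [List.replicate_succ, hts', List.mem_cons] at hx
    rcases hx with rfl | hx
    · simp [stepVal]
    · have := ih hx; simp [stepVal] at this ⊢; omega

lemma hend_mem_hts' {h : ℤ} {p : List Bool} (hp : p ≠ []) : hend h p ∈ hts' h p := by
  induction p generalizing h with
  | nil => simp at hp
  | cons b p ih =>
    rcases Decidable.em (p = []) with rfl | hne
    · simp [hts', hend]
    · simp only [hts', hend, List.mem_cons]
      exact Or.inr (ih hne)

/-- valley levels, recursive version -/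
def vls (h : ℤ) : List Bool → List ℤ
  | b :: c :: t =>
      if b = false ∧ c = true then (h + stepVal b) :: vls (h + stepVal b) (c :: t)
      else vls (h + stepVal b) (c :: t)
  | _ => []

lemma vls_eq_aux (p : List Bool) : ∀ h : ℤ,
    ((p.zip p.tail).zip (hts' h p)).filterMap
      (fun x => if x.1.1 = false ∧ x.1.2 = true then some x.2 else none) = vls h p := by
  induction p with
  | nil => intro h; rfl
  | cons b p ih =>
    intro h
    cases p with
    | nil => rfl
    | cons c t =>
      show (((b, c) :: (c :: t).zip t).zip ((h + stepVal b) :: hts' (h + stepVal b) (c :: t))).filterMap _ = _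
      rw [List.zip_cons_cons, List.filterMap_cons]
      simp only [List.tail_cons] at ih
      by_cases hbc : b = false ∧ c = true
      · rw [if_pos hbc, vls, if_pos hbc]
        exact congrArg _ (ih (h + stepVal b))
      · rw [if_neg hbc, vls, if_neg hbc]
        exact ih (h + stepVal b)

lemma valleyLevels_eq (p : List Bool) : valleyLevels p = vls 0 p := by
  rw [valleyLevels, heights_eq]
  exact vls_eq_aux p 0

/-- number of peaks, recursive version -/
def pks : List Bool → ℕ
  | b :: c :: t => (if b = true ∧ c = false then 1 else 0) + pks (c :: t)
  | _ => 0

lemma peaks_eq (p : List Bool) : peaks p = pks p := by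
  rw [peaks]
  induction p with
  | nil => rfl
  | cons b p ih =>
    cases p with
    | nil => rfl
    | cons c t =>
      rw [show (b :: c :: t).zip (b :: c :: t).tail = (b, c) :: ((c :: t).zip t) from rfl,
        List.countP_cons]
      rw [show pks (b :: c :: t) = (if b = true ∧ c = false then 1 else 0) + pks (c :: t) from rfl]
      simp only [List.tail_cons] at ih
      rw [← ih]
      have : ((b, c).1 && !(b, c).2) = true ↔ (b = true ∧ c = false) := by
        simp
      rcases Decidable.em (b = true ∧ c = false) with hbc | hbc
      · rw [if_pos hbc, if_pos (this.2 hbc)]; omega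
      · rw [if_neg hbc, if_neg (fun hh => hbc (this.1 hh))]; omega

end DyckAux

namespace DyckAux

def dec : List (ℕ × ℕ) → List Bool
  | [] => []
  | ab :: L => (List.replicate ab.1 true ++ List.replicate ab.2 false) ++ dec L

def Pos (L : List (ℕ × ℕ)) : Prop := ∀ x ∈ L, 0 < x.1 ∧ 0 < x.2

lemma Pos.tail {ab : ℕ × ℕ} {L : List (ℕ × ℕ)} (h : Pos (ab :: L)) : Pos L :=
  fun x hx => h x (List.mem_cons_of_mem _ hx)

lemma dec_head {L : List (ℕ × ℕ)} (hP : Pos L) (hL : L ≠ []) : ∃ t, dec L = true :: t := by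
  obtain ⟨⟨a, b⟩, L', rfl⟩ : ∃ ab L', L = ab :: L' := by
    cases L with | nil => exact absurd rfl hL | cons x xs => exact ⟨x, xs, rfl⟩
  have ha : 0 < a := (hP _ (List.mem_cons_self)).1
  obtain ⟨a', rfl⟩ : ∃ a', a = a' + 1 := ⟨a - 1, by omega⟩
  refine ⟨List.replicate a' true ++ List.replicate b false ++ dec L', ?_⟩
  show (List.replicate (a'+1) true ++ List.replicate b false) ++ dec L' = _
  rw [List.replicate_succ]
  simp

lemma dec_eq_nil_iff {L : List (ℕ × ℕ)} (hP : Pos L) : dec L = [] ↔ L = [] := by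
  constructor
  · intro h
    by_contra hne
    obtain ⟨t, ht⟩ := dec_head hP hne
    rw [h] at ht; exact absurd ht (by simp)
  · rintro rfl; rfl

/-- convenient shape hypothesis -/
def HT (r : List Bool) : Prop := r = [] ∨ ∃ t, r = true :: t

lemma ht_dec {L : List (ℕ × ℕ)} (hP : Pos L) : HT (dec L) := by
  rcases Decidable.em (L = []) with rfl | h
  · exact Or.inl rfl
  · exact Or.inr (dec_head hP h)

lemma pksF : ∀ (b : ℕ) (r : List Bool), HT r →
    pks (List.replicate b false ++ r) = pks r
  | 0, r, _ => rfl
  | 1, r, hr => by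
    rcases hr with rfl | ⟨t, rfl⟩
    · rfl
    · show (if (false = true ∧ true = false) then 1 else 0) + pks (true :: t) = pks (true :: t)
      simp
  | (b+2), r, hr => by
    have ih := pksF (b+1) r hr
    show (if (false = true ∧ false = false) then 1 else 0) + pks (List.replicate (b+1) false ++ r)
        = pks r
    simpa using ih

lemma pks_block : ∀ (a b : ℕ) (r : List Bool), 0 < b → HT r →
    pks (List.replicate (a+1) true ++ (List.replicate b false ++ r)) = 1 + pks r
  | 0, b, r, hb, hr => by
    obtain ⟨b', rfl⟩ : ∃ b', b = b' + 1 := ⟨b - 1, by omega⟩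
    show (if (true = true ∧ false = false) then 1 else 0) +
        pks (List.replicate (b'+1) false ++ r) = 1 + pks r
    rw [pksF _ r hr]; simp
  | (a+1), b, r, hb, hr => by
    have ih := pks_block a b r hb hr
    show (if (true = true ∧ true = false) then 1 else 0) +
        pks (List.replicate (a+1) true ++ (List.replicate b false ++ r)) = 1 + pks r
    simpa using ih

lemma vlsF : ∀ (b : ℕ) (r : List Bool) (h : ℤ), HT r →
    vls h (List.replicate (b+1) false ++ r) =
      if r = [] then [] else (h - (b+1)) :: vls (h - (b+1)) r
  | 0, r, h, hr => by
    rcases hr with rfl | ⟨t, rfl⟩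
    · rfl
    · show vls h (false :: true :: t) = _
      rw [vls, if_pos ⟨rfl, rfl⟩, if_neg (List.cons_ne_nil _ _)]
      rw [show h + stepVal false = h - ((0:ℕ)+1) by simp [stepVal]; ring]
  | (b+1), r, h, hr => by
    have ih := vlsF b r (h - 1) hr
    rw [List.replicate_succ, List.cons_append] at ih
    show vls h (false :: false :: (List.replicate b false ++ r)) = _
    rw [vls, if_neg (by simp), show h + stepVal false = h - 1 by simp [stepVal]; ring, ih]
    rcases Decidable.em (r = []) with rfl | hne
    · simp
    · rw [if_neg hne, if_neg hne, show h - 1 - ((b:ℤ)+1) = h - ((b:ℤ)+1+1) by ring]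
      push_cast
      ring_nf

lemma vls_block : ∀ (a b : ℕ) (r : List Bool) (h : ℤ), 0 < b → HT r →
    vls h (List.replicate (a+1) true ++ (List.replicate b false ++ r)) =
      if r = [] then [] else (h + (a+1) - b) :: vls (h + (a+1) - b) r
  | 0, b, r, h, hb, hr => by
    obtain ⟨b', rfl⟩ : ∃ b', b = b' + 1 := ⟨b - 1, by omega⟩
    show vls h (true :: false :: (List.replicate b' false ++ r)) = _
    rw [vls, if_neg (by simp), show h + stepVal true = h + 1 by simp [stepVal]]
    rw [show (false :: (List.replicate b' false ++ r)) = List.replicate (b'+1) false ++ r from rfl,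
      vlsF b' r (h+1) hr]
    rcases Decidable.em (r = []) with rfl | hne
    · simp
    · rw [if_neg hne, if_neg hne,
        show h + 1 - ((b':ℤ)+1) = h + (((0:ℕ):ℤ)+1) - ((b':ℤ)+1) by push_cast; ring]
      push_cast
      ring_nf
  | (a+1), b, r, h, hb, hr => by
    have ih := vls_block a b r (h+1) hb hr
    show vls h (true :: true :: (List.replicate a true ++ (List.replicate b false ++ r))) = _
    rw [vls, if_neg (by simp), show h + stepVal true = h + 1 by simp [stepVal]]
    rw [show (true :: (List.replicate a true ++ (List.replicate b false ++ r)))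
        = List.replicate (a+1) true ++ (List.replicate b false ++ r) from rfl, ih]
    rcases Decidable.em (r = []) with rfl | hne
    · simp
    · rw [if_neg hne, if_neg hne,
        show h + 1 + ((a:ℤ)+1) - b = h + (((a:ℤ)+1)+1) - b by push_cast; ring]
      push_cast
      ring_nf

end DyckAux

namespace DyckAux

/-- inner valley levels of the block list -/
def vset (h : ℤ) : List (ℕ × ℕ) → List ℤ
  | [] => []
  | ab :: L => if L = [] then [] else (h + ab.1 - ab.2) :: vset (h + ab.1 - ab.2) L

/-- all partial sums (block-end levels) -/
def vsums (h : ℤ) : List (ℕ × ℕ) → List ℤ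
  | [] => []
  | ab :: L => (h + ab.1 - ab.2) :: vsums (h + ab.1 - ab.2) L

lemma pks_dec {L : List (ℕ × ℕ)} (hP : Pos L) : pks (dec L) = L.length := by
  induction L with
  | nil => rfl
  | cons ab L ih =>
    obtain ⟨a, b⟩ := ab
    have ha : 0 < a := (hP _ (List.mem_cons_self)).1
    have hb : 0 < b := (hP _ (List.mem_cons_self)).2
    obtain ⟨a', rfl⟩ : ∃ a', a = a' + 1 := ⟨a - 1, by omega⟩
    show pks ((List.replicate (a'+1) true ++ List.replicate b false) ++ dec L) = L.length + 1
    rw [List.append_assoc, pks_block a' b (dec L) hb (ht_dec hP.tail), ih hP.tail]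
    omega

lemma vls_dec {L : List (ℕ × ℕ)} (hP : Pos L) : ∀ h : ℤ, vls h (dec L) = vset h L := by
  induction L with
  | nil => intro h; rfl
  | cons ab L ih =>
    intro h
    obtain ⟨a, b⟩ := ab
    have ha : 0 < a := (hP _ (List.mem_cons_self)).1
    have hb : 0 < b := (hP _ (List.mem_cons_self)).2
    obtain ⟨a', rfl⟩ : ∃ a', a = a' + 1 := ⟨a - 1, by omega⟩
    show vls h ((List.replicate (a'+1) true ++ List.replicate b false) ++ dec L) = _
    rw [List.append_assoc, vls_block a' b (dec L) h hb (ht_dec hP.tail)]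
    rw [show vset h ((a'+1, b) :: L) =
      if L = [] then [] else (h + (a'+1 : ℕ) - b) :: vset (h + (a'+1:ℕ) - b) L from rfl]
    rcases Decidable.em (L = []) with rfl | hne
    · simp [dec]
    · rw [if_neg ((not_iff_not.2 (dec_eq_nil_iff hP.tail)).2 hne), if_neg hne, ih hP.tail]
      push_cast
      ring_nf

lemma hts'_dec_nonneg {L : List (ℕ × ℕ)} (hP : Pos L) : ∀ h : ℤ, 0 ≤ h →
    (∀ x ∈ vsums h L, 0 ≤ x) → ∀ x ∈ hts' h (dec L), 0 ≤ x := by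
  induction L with
  | nil => intro h _ _ x hx; simp [dec, hts'] at hx
  | cons ab L ih =>
    intro h h0 hv x hx
    obtain ⟨a, b⟩ := ab
    rw [show dec ((a,b) :: L) = List.replicate a true ++ (List.replicate b false ++ dec L) by
        rw [dec]; rw [List.append_assoc]] at hx
    rw [hts'_append, hts'_append, hend_replicate_true, hend_replicate_false] at hx
    have hvh : (0:ℤ) ≤ h + a - b := hv _ (by rw [vsums]; exact List.mem_cons_self)
    simp only [List.mem_append] at hx
    rcases hx with hx | hx | hx
    · exact le_trans h0 (mem_hts'_replicate_true hx)
    · have := mem_hts'_replicate_false hx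
      omega
    · exact ih hP.tail _ hvh (fun y hy => hv _ (by rw [vsums]; exact List.mem_cons_of_mem _ hy)) x hx

lemma vsums_nonneg_of_hts' {L : List (ℕ × ℕ)} (hP : Pos L) : ∀ h : ℤ,
    (∀ x ∈ hts' h (dec L), 0 ≤ x) → ∀ x ∈ vsums h L, 0 ≤ x := by
  induction L with
  | nil => intro h _ x hx; simp [vsums] at hx
  | cons ab L ih =>
    intro h hh x hx
    obtain ⟨a, b⟩ := ab
    have hb : 0 < b := (hP _ (List.mem_cons_self)).2
    have hdec : dec ((a,b) :: L) = List.replicate a true ++ (List.replicate b false ++ dec L) := by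
      rw [dec]; rw [List.append_assoc]
    rw [vsums, List.mem_cons] at hx
    rcases hx with rfl | hx
    · have hmem : h + a - b ∈ hts' h (dec ((a,b) :: L)) := by
        rw [hdec, hts'_append, hts'_append, hend_replicate_true]
        have : hend (h + a) (List.replicate b false) ∈ hts' (h + a) (List.replicate b false) :=
          hend_mem_hts' (by
            intro hc
            have := congrArg List.length hc
            simp at this
            omega)
        rw [hend_replicate_false] at this
        simp only [List.mem_append]
        exact Or.inr (Or.inl this)
      exact hh _ hmem
    · refine ih hP.tail (h + a - b) (fun y hy => hh y ?_) x hx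
      rw [hdec, hts'_append, hts'_append, hend_replicate_true, hend_replicate_false]
      simp only [List.mem_append]
      exact Or.inr (Or.inr hy)

lemma count_true_dec (L : List (ℕ × ℕ)) : (dec L).count true = (L.map Prod.fst).sum := by
  induction L with
  | nil => rfl
  | cons ab L ih =>
    rw [dec, List.count_append, List.count_append, ih]
    simp [List.count_replicate]

lemma count_false_dec (L : List (ℕ × ℕ)) : (dec L).count false = (L.map Prod.snd).sum := by
  induction L with
  | nil => rfl
  | cons ab L ih =>
    rw [dec, List.count_append, List.count_append, ih]
    simp [List.count_replicate]

lemma takeWhile_true_repl (a : ℕ) (s : List Bool) (hs : s = [] ∨ ∃ t, s = false :: t) :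
    (List.replicate a true ++ s).takeWhile (fun x => x == true) = List.replicate a true := by
  induction a with
  | zero =>
    rcases hs with rfl | ⟨t, rfl⟩
    · rfl
    · simp [List.takeWhile_cons]
  | succ n ih =>
    rw [List.replicate_succ, List.cons_append, List.takeWhile_cons, if_pos (by rfl), ih]

lemma takeWhile_false_repl (b : ℕ) (s : List Bool) (hs : s = [] ∨ ∃ t, s = true :: t) :
    (List.replicate b false ++ s).takeWhile (fun x => x == false) = List.replicate b false := by
  induction b with
  | zero =>
    rcases hs with rfl | ⟨t, rfl⟩
    · rfl
    · simp [List.takeWhile_cons]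
  | succ n ih =>
    rw [List.replicate_succ, List.cons_append, List.takeWhile_cons, if_pos (by rfl), ih]

lemma dec_inj : ∀ {L M : List (ℕ × ℕ)}, Pos L → Pos M → dec L = dec M → L = M
  | [], [], _, _, _ => rfl
  | [], (ab :: M), _, hM, h => by
    exfalso
    obtain ⟨t, ht⟩ := dec_head hM (List.cons_ne_nil _ _)
    rw [← h] at ht
    exact absurd ht (by simp [dec])
  | (ab :: L), [], hL, _, h => by
    exfalso
    obtain ⟨t, ht⟩ := dec_head hL (List.cons_ne_nil _ _)
    rw [h] at ht
    exact absurd ht (by simp [dec])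
  | ((a, b) :: L), ((a', b') :: M), hL, hM, h => by
    have ha : 0 < a := (hL _ (List.mem_cons_self)).1
    have hb : 0 < b := (hL _ (List.mem_cons_self)).2
    have ha' : 0 < a' := (hM _ (List.mem_cons_self)).1
    have hb' : 0 < b' := (hM _ (List.mem_cons_self)).2
    rw [dec, dec, List.append_assoc, List.append_assoc] at h
    -- first: a = a'
    have hsA : ∀ (b : ℕ) (N : List (ℕ × ℕ)), 0 < b →
        (List.replicate b false ++ dec N) = [] ∨
          ∃ t, (List.replicate b false ++ dec N) = false :: t := by
      intro b N hb
      obtain ⟨b2, rfl⟩ : ∃ b2, b = b2 + 1 := ⟨b - 1, by omega⟩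
      exact Or.inr ⟨_, by rw [List.replicate_succ, List.cons_append]⟩
    have haa : a = a' := by
      have h1 := takeWhile_true_repl a (List.replicate b false ++ dec L) (hsA b L hb)
      have h2 := takeWhile_true_repl a' (List.replicate b' false ++ dec M) (hsA b' M hb')
      have := congrArg (List.takeWhile (fun x => x == true)) h
      rw [h1, h2] at this
      have := congrArg List.length this
      simpa using this
    subst haa
    have h2 : List.replicate b false ++ dec L = List.replicate b' false ++ dec M :=
      List.append_cancel_left h
    have hbb : b = b' := by
      have h1 := takeWhile_false_repl b (dec L) (ht_dec hL.tail)
      have h2' := takeWhile_false_repl b' (dec M) (ht_dec hM.tail)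
      have := congrArg (List.takeWhile (fun x => x == false)) h2
      rw [h1, h2'] at this
      have := congrArg List.length this
      simpa using this
    subst hbb
    have h3 : dec L = dec M := List.append_cancel_left h2
    rw [dec_inj hL.tail hM.tail h3]

end DyckAux

namespace DyckAux

lemma hend_count (p : List Bool) : ∀ h : ℤ, hend h p = h + p.count true - p.count false := by
  induction p with
  | nil => intro h; simp [hend]
  | cons b p ih =>
    intro h
    rw [hend, ih]
    cases b <;> simp [stepVal, List.count_cons] <;> push_cast <;> ring

/-- a nonempty Dyck path starts with an up-step -/
lemma dyck_head {p : List Bool} (hd : IsDyck p) (hne : p ≠ []) : ∃ t, p = true :: t := by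
  cases p with
  | nil => exact absurd rfl hne
  | cons b t =>
    cases b
    · exfalso
      have : (0:ℤ) + stepVal false ∈ hts' 0 (false :: t) := by
        rw [hts']; exact List.mem_cons_self
      have h2 := hd.2 _ (by rw [heights_eq]; exact List.mem_cons_of_mem _ this)
      simp [stepVal] at h2
    · exact ⟨t, rfl⟩

/-- a nonempty Dyck path ends with a down-step -/
lemma dyck_last {p : List Bool} (hd : IsDyck p) (hne : p ≠ []) : p.getLast? = some false := by
  obtain ⟨q, b, rfl⟩ : ∃ q b, p = q ++ [b] := by
    rcases List.eq_nil_or_concat p with rfl | ⟨q, b, hqb⟩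
    · exact absurd rfl hne
    · exact ⟨q, b, by simpa [List.concat_eq_append] using hqb⟩
  rw [List.getLast?_append_of_ne_nil _ (List.cons_ne_nil _ _)]
  cases b
  · rfl
  · exfalso
    have hz : hend 0 (q ++ [true]) = 0 := by
      rw [hend_count]
      have := hd.1
      simp at this ⊢
      omega
    rw [hend_append] at hz
    have hq : hend 0 q = -1 := by simp [hend, stepVal] at hz; omega
    rcases Decidable.em (q = []) with rfl | hqne
    · simp [hend] at hq
    · have hmem : hend 0 q ∈ hts' 0 (q ++ [true]) := by
        rw [hts'_append]
        exact List.mem_append_left _ (hend_mem_hts' hqne)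
      have := hd.2 _ (by rw [heights_eq]; exact List.mem_cons_of_mem _ hmem)
      omega

lemma dropWhile_shape (pr : Bool → Bool) (l : List Bool) :
    l.dropWhile pr = [] ∨ ∃ t x, l.dropWhile pr = x :: t ∧ pr x = false := by
  induction l with
  | nil => exact Or.inl rfl
  | cons b l ih =>
    rw [List.dropWhile_cons]
    rcases Decidable.em (pr b = true) with hb | hb
    · rw [if_pos hb]; exact ih
    · rw [if_neg hb]; exact Or.inr ⟨l, b, rfl, by simpa using hb⟩

lemma exists_dec : ∀ (N : ℕ) (p : List Bool), p.length ≤ N → p ≠ [] →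
    (∃ t, p = true :: t) → p.getLast? = some false →
    ∃ L, Pos L ∧ dec L = p := by
  intro N
  induction N with
  | zero =>
    intro p hl hne _ _
    exact absurd (List.length_eq_zero_iff.mp (Nat.le_zero.mp hl)) hne
  | succ N ih =>
    intro p hl hne hhead hlast
    set q := p.dropWhile (fun x => x == true) with hq
    have hsplit : p.takeWhile (fun x => x == true) ++ q = p :=
      List.takeWhile_append_dropWhile
    set a := (p.takeWhile (fun x => x == true)).length with ha
    have htw : p.takeWhile (fun x => x == true) = List.replicate a true := by
      rw [List.eq_replicate_iff]
      exact ⟨rfl, fun b hb => by simpa using List.mem_takeWhile_imp hb⟩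
    have ha1 : 0 < a := by
      obtain ⟨t, rfl⟩ := hhead
      rw [ha]
      rw [List.takeWhile_cons, if_pos (by rfl)]
      simp
    -- q starts with false or is empty
    rcases dropWhile_shape (fun x => x == true) p with hq0 | ⟨t, x, hqx, hxf⟩
    · -- p is all trues; contradicts last = false
      exfalso
      rw [← hsplit, htw] at hlast
      rw [← hq] at hq0
      rw [hq0, List.append_nil] at hlast
      rw [List.getLast?_replicate] at hlast
      rcases Decidable.em (a = 0) with h0 | h0
      · omega
      · simp [h0] at hlast
    · have hx : x = false := by cases x; rfl; simp at hxf
      subst hx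
      rw [← hq] at hqx
      -- now split q into false-run and rest
      set r := q.dropWhile (fun x => x == false) with hr
      have hsplit2 : q.takeWhile (fun x => x == false) ++ r = q :=
        List.takeWhile_append_dropWhile
      set b := (q.takeWhile (fun x => x == false)).length with hb
      have htwb : q.takeWhile (fun x => x == false) = List.replicate b false := by
        rw [List.eq_replicate_iff]
        exact ⟨rfl, fun y hy => by simpa using List.mem_takeWhile_imp hy⟩
      have hb1 : 0 < b := by
        rw [hb, hqx, List.takeWhile_cons, if_pos (by rfl)]
        simp
      have hpdec : List.replicate a true ++ (List.replicate b false ++ r) = p := by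
        rw [← htw, ← htwb, hsplit2, hsplit]
      rcases dropWhile_shape (fun x => x == false) q with hr0 | ⟨t', x', hrx, hxf'⟩
      · -- r = [], single block
        rw [← hr] at hr0
        refine ⟨[(a, b)], fun z hz => by simp at hz; subst hz; exact ⟨ha1, hb1⟩, ?_⟩
        show (List.replicate a true ++ List.replicate b false) ++ dec [] = p
        rw [show dec [] = [] from rfl, List.append_nil, ← hpdec, hr0, List.append_nil]
      · have hx' : x' = true := by cases x'; simp at hxf'; rfl
        subst hx'
        rw [← hr] at hrx
        -- recurse on r
        have hrne : r ≠ [] := by rw [hrx]; exact List.cons_ne_nil _ _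
        have hrlast : r.getLast? = some false := by
          rw [← hpdec] at hlast
          rw [List.getLast?_append_of_ne_nil _ (by simp [hrne])] at hlast
          rw [List.getLast?_append_of_ne_nil _ hrne] at hlast
          exact hlast
        have hrlen : r.length ≤ N := by
          have h1 := congrArg List.length hpdec
          simp at h1
          omega
        obtain ⟨L', hPL', hdecL'⟩ := ih r hrlen hrne ⟨t', hrx⟩ hrlast
        refine ⟨(a, b) :: L', ?_, ?_⟩
        · intro z hz
          rcases List.mem_cons.1 hz with rfl | hz'
          · exact ⟨ha1, hb1⟩
          · exact hPL' z hz'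
        · show (List.replicate a true ++ List.replicate b false) ++ dec L' = p
          rw [hdecL', List.append_assoc, hpdec]

end DyckAux

namespace DyckAux

def sumA (L : List (ℕ × ℕ)) : ℕ := (L.map Prod.fst).sum
def sumB (L : List (ℕ × ℕ)) : ℕ := (L.map Prod.snd).sum

def Sset (d : ℤ) (n k : ℕ) : Set (List Bool) :=
  {p | IsDyck p ∧ RestrictedD d p ∧ semilength p = n ∧ peaks p = k}

def Lset (d : ℤ) (n k : ℕ) : Set (List (ℕ × ℕ)) :=
  {L | Pos L ∧ sumA L = sumB L ∧ (∀ x ∈ vsums 0 L, 0 ≤ x) ∧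
    List.Chain' (fun a b => d ≤ b - a) (vset 0 L) ∧ sumA L = n ∧ L.length = k}

lemma dec_mem_iff {d : ℤ} {n k : ℕ} {L : List (ℕ × ℕ)} (hP : Pos L) :
    dec L ∈ Sset d n k ↔ L ∈ Lset d n k := by
  have hsem : semilength (dec L) = sumA L := count_true_dec L
  have hpk : peaks (dec L) = L.length := by rw [peaks_eq, pks_dec hP]
  have hrd : RestrictedD d (dec L) ↔ List.Chain' (fun a b => d ≤ b - a) (vset 0 L) := by
    rw [RestrictedD, valleyLevels_eq, vls_dec hP]
  have hdy : IsDyck (dec L) ↔ (sumA L = sumB L ∧ ∀ x ∈ vsums 0 L, 0 ≤ x) := by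
    constructor
    · intro ⟨h1, h2⟩
      refine ⟨by rw [sumA, sumB, ← count_true_dec, ← count_false_dec, h1], ?_⟩
      exact vsums_nonneg_of_hts' hP 0 (fun x hx => h2 _ (by
        rw [heights_eq]; exact List.mem_cons_of_mem _ hx))
    · intro ⟨h1, h2⟩
      constructor
      · show List.count true (dec L) = List.count false (dec L)
        rw [count_true_dec, count_false_dec]
        simpa [sumA, sumB] using h1
      · intro x hx
        rw [heights_eq, List.mem_cons] at hx
        rcases hx with rfl | hx
        · exact le_refl 0
        · exact hts'_dec_nonneg hP 0 le_rfl h2 x hx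
  simp only [Sset, Lset, Set.mem_setOf_eq]
  rw [hdy, hrd, hsem, hpk]
  tauto

lemma Sset_eq_image (d : ℤ) (n k : ℕ) : Sset d n k = dec '' Lset d n k := by
  ext p
  constructor
  · intro hp
    rcases Decidable.em (p = []) with rfl | hne
    · have hn : n = 0 := by
        have := hp.2.2.1
        simpa [semilength] using this.symm
      have hk : k = 0 := by
        have := hp.2.2.2
        simpa [peaks] using this.symm
      refine ⟨[], ?_, rfl⟩
      rw [← dec_mem_iff (fun x hx => by simp at hx)]
      exact hp
    · obtain ⟨L, hPL, hdec⟩ := exists_dec p.length p le_rfl hne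
        (dyck_head hp.1 hne) (dyck_last hp.1 hne)
      exact ⟨L, (dec_mem_iff hPL).1 (hdec ▸ hp), hdec⟩
  · rintro ⟨L, hL, rfl⟩
    exact (dec_mem_iff hL.1).2 hL

lemma ncard_Sset (d : ℤ) (n k : ℕ) : (Sset d n k).ncard = (Lset d n k).ncard := by
  rw [Sset_eq_image]
  exact Set.ncard_image_of_injOn (fun L hL M hM h => dec_inj hL.1 hM.1 h)

/- k = 0 and k = 1 -/
lemma Lset_zero (d : ℤ) (n : ℕ) : Lset d n 0 = if n = 0 then {([] : List (ℕ × ℕ))} else ∅ := by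
  ext L
  rcases Decidable.em (n = 0) with rfl | hn
  · simp only [if_pos rfl, Set.mem_singleton_iff, Lset, Set.mem_setOf_eq]
    constructor
    · intro h
      exact List.length_eq_zero_iff.mp h.2.2.2.2.2
    · rintro rfl
      refine ⟨fun x hx => by simp at hx, rfl, fun x hx => by simp [vsums] at hx, ?_, rfl, rfl⟩
      simp [vset]; exact List.isChain_nil
  · simp only [if_neg hn, Set.mem_empty_iff_false, iff_false, Lset, Set.mem_setOf_eq]
    rintro ⟨_, _, _, _, hsum, hlen⟩
    have : L = [] := List.length_eq_zero_iff.mp hlen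
    subst this
    exact hn (by simpa [sumA] using hsum.symm)

lemma Lset_one (d : ℤ) (n : ℕ) :
    Lset d n 1 = if n = 0 then ∅ else {[(n, n)]} := by
  rcases Decidable.em (n = 0) with rfl | hn
  · rw [if_pos rfl]
    ext L
    simp only [Set.mem_empty_iff_false, iff_false, Lset, Set.mem_setOf_eq]
    rintro ⟨hP, _, _, _, hsum, hlen⟩
    obtain ⟨ab, rfl⟩ : ∃ ab, L = [ab] := List.length_eq_one_iff.mp hlen
    have := (hP ab (List.mem_cons_self)).1
    simp [sumA] at hsum
    omega
  · rw [if_neg hn]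
    ext L
    simp only [Set.mem_singleton_iff, Lset, Set.mem_setOf_eq]
    constructor
    · rintro ⟨hP, hAB, _, _, hsum, hlen⟩
      obtain ⟨⟨a, b⟩, rfl⟩ : ∃ ab, L = [ab] := List.length_eq_one_iff.mp hlen
      simp only [sumA, sumB, List.map_cons, List.map_nil, List.sum_cons, List.sum_nil,
        add_zero] at hAB hsum
      subst hsum
      subst hAB
      rfl
    · rintro rfl
      have hn' : 0 < n := Nat.pos_of_ne_zero hn
      refine ⟨?_, by simp [sumA, sumB], ?_, ?_, by simp [sumA], rfl⟩
      · intro x hx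
        rw [List.mem_singleton] at hx
        subst hx
        exact ⟨hn', hn'⟩
      · intro x hx
        simp [vsums] at hx
        simp [hx]
      · simp [vset]; exact List.isChain_nil

end DyckAux

namespace DyckAux

variable {d : ℕ}

def bld (d : ℕ) (h : ℕ) : List (ℕ × ℕ) → ℕ → List (ℕ × ℕ)
  | [], eL => [(eL + 1, h + eL + 1)]
  | (g, e) :: q, eL => (d + g + e + 1, e + 1) :: bld d (h + d + g) q eL

def bigL (d v1 e1 : ℕ) (q : List (ℕ × ℕ)) (eL : ℕ) : List (ℕ × ℕ) :=
  (v1 + e1 + 1, e1 + 1) :: bld d v1 q eL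

def sumP (q : List (ℕ × ℕ)) : ℕ := (q.map fun x => x.1 + x.2).sum

lemma bld_ne_nil (h : ℕ) (q : List (ℕ × ℕ)) (eL : ℕ) : bld d h q eL ≠ [] := by
  cases q with
  | nil => exact List.cons_ne_nil _ _
  | cons ge q => obtain ⟨g, e⟩ := ge; exact List.cons_ne_nil _ _

lemma bld_pos (q : List (ℕ × ℕ)) : ∀ (h eL : ℕ), Pos (bld d h q eL) := by
  induction q with
  | nil => intro h eL x hx; simp [bld] at hx; subst hx; simp
  | cons ge q ih =>
    obtain ⟨g, e⟩ := ge
    intro h eL x hx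
    rw [bld, List.mem_cons] at hx
    rcases hx with rfl | hx
    · simp
    · exact ih _ _ x hx

lemma bld_length (q : List (ℕ × ℕ)) : ∀ (h eL : ℕ), (bld d h q eL).length = q.length + 1 := by
  induction q with
  | nil => intro h eL; rfl
  | cons ge q ih => obtain ⟨g, e⟩ := ge; intro h eL; simp [bld, ih]

lemma bld_sumA (q : List (ℕ × ℕ)) : ∀ (h eL : ℕ),
    sumA (bld d h q eL) = q.length * (d + 1) + sumP q + eL + 1 := by
  induction q with
  | nil => intro h eL; simp [bld, sumA, sumP]
  | cons ge q ih =>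
    obtain ⟨g, e⟩ := ge
    intro h eL
    simp only [bld, sumA, List.map_cons, List.sum_cons] at ih ⊢
    rw [ih (h + d + g) eL]
    simp only [sumP, List.map_cons, List.sum_cons, List.length_cons]
    ring

lemma bld_sumB (q : List (ℕ × ℕ)) : ∀ (h eL : ℕ),
    sumB (bld d h q eL) = sumA (bld d h q eL) + h := by
  induction q with
  | nil => intro h eL; simp [bld, sumA, sumB]; omega
  | cons ge q ih =>
    obtain ⟨g, e⟩ := ge
    intro h eL
    simp only [bld, sumA, sumB, List.map_cons, List.sum_cons] at ih ⊢
    rw [ih (h + d + g) eL]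
    omega

lemma bld_vsums_nonneg (q : List (ℕ × ℕ)) : ∀ (h eL : ℕ) (x : ℤ),
    x ∈ vsums (h : ℤ) (bld d h q eL) → 0 ≤ x := by
  induction q with
  | nil =>
    intro h eL x hx
    simp [bld, vsums] at hx
    subst hx
    push_cast
    ring_nf
    positivity
  | cons ge q ih =>
    obtain ⟨g, e⟩ := ge
    intro h eL x hx
    rw [bld, vsums, List.mem_cons] at hx
    have hcast : (h : ℤ) + ((d : ℕ) + g + e + 1 : ℕ) - ((e + 1 : ℕ) : ℤ) = ((h + d + g : ℕ) : ℤ) := by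
      push_cast; ring
    rcases hx with rfl | hx
    · rw [hcast]; positivity
    · rw [hcast] at hx
      exact ih _ _ x hx

lemma bld_chain (q : List (ℕ × ℕ)) : ∀ (h eL : ℕ),
    List.Chain' (fun a b => (d : ℤ) ≤ b - a) ((h : ℤ) :: vset (h : ℤ) (bld d h q eL)) := by
  induction q with
  | nil =>
    intro h eL
    simp [bld, vset]; exact List.isChain_singleton _
  | cons ge q ih =>
    obtain ⟨g, e⟩ := ge
    intro h eL
    rw [bld, vset, if_neg (bld_ne_nil _ q eL)]
    have hcast : (h : ℤ) + ((d : ℕ) + g + e + 1 : ℕ) - ((e + 1 : ℕ) : ℤ) = ((h + d + g : ℕ) : ℤ) := by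
      push_cast; ring
    rw [hcast]
    refine List.IsChain.cons_cons ?_ (ih (h + d + g) eL)
    push_cast
    omega

/-- completeness -/
lemma bld_complete : ∀ (L : List (ℕ × ℕ)) (h : ℕ), L ≠ [] → Pos L →
    (∀ x ∈ vsums (h : ℤ) L, 0 ≤ x) →
    List.Chain' (fun a b => (d : ℤ) ≤ b - a) ((h : ℤ) :: vset (h : ℤ) L) →
    sumB L = sumA L + h →
    ∃ q eL, L = bld d h q eL
  | [], h, hne, _, _, _, _ => absurd rfl hne
  | [(a, b)], h, _, hP, hv, hc, hbal => by
    have ha : 0 < a := (hP _ (List.mem_cons_self)).1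
    refine ⟨[], a - 1, ?_⟩
    simp only [sumA, sumB, List.map_cons, List.map_nil, List.sum_cons, List.sum_nil,
      add_zero] at hbal
    rw [bld]
    have : a - 1 + 1 = a := by omega
    rw [this]
    have : h + (a - 1) + 1 = b := by omega
    rw [this]
  | ((a, b) :: (ab2 :: L'')), h, _, hP, hv, hc, hbal => by
    have ha : 0 < a := (hP _ (List.mem_cons_self)).1
    have hb : 0 < b := (hP _ (List.mem_cons_self)).2
    have hvset : vset (h : ℤ) ((a, b) :: (ab2 :: L'')) =
        ((h : ℤ) + a - b) :: vset ((h : ℤ) + a - b) (ab2 :: L'') := by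
      rw [vset, if_neg (List.cons_ne_nil _ _)]
    rw [hvset] at hc
    have hd : (d : ℤ) ≤ ((h : ℤ) + a - b) - h := (List.isChain_cons_cons.mp hc).1
    have hge : b + d ≤ a := by omega
    set g := a - (b + d) with hg
    set e := b - 1 with he
    have hab : a = d + g + e + 1 ∧ b = e + 1 := by omega
    have hlev : (h : ℤ) + a - b = ((h + d + g : ℕ) : ℤ) := by push_cast; omega
    have hv' : ∀ x ∈ vsums ((h + d + g : ℕ) : ℤ) (ab2 :: L''), 0 ≤ x := by
      intro x hx
      refine hv x ?_
      rw [vsums, List.mem_cons]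
      right
      rwa [hlev]
    have hc' : List.Chain' (fun a b => (d : ℤ) ≤ b - a)
        (((h + d + g : ℕ) : ℤ) :: vset ((h + d + g : ℕ) : ℤ) (ab2 :: L'')) := by
      rw [← hlev]
      exact (List.isChain_cons_cons.mp hc).2
    have hbal' : sumB (ab2 :: L'') = sumA (ab2 :: L'') + (h + d + g) := by
      simp only [sumA, sumB, List.map_cons, List.sum_cons] at hbal ⊢
      omega
    obtain ⟨q, eL, hq⟩ := bld_complete (ab2 :: L'') (h + d + g) (List.cons_ne_nil _ _)
      hP.tail hv' hc' hbal'
    refine ⟨(g, e) :: q, eL, ?_⟩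
    rw [bld, ← hq, ← hab.1, ← hab.2]

lemma bld_inj : ∀ (q q' : List (ℕ × ℕ)) (h eL eL' : ℕ),
    bld d h q eL = bld d h q' eL' → q = q' ∧ eL = eL'
  | [], [], h, eL, eL', heq => by
    simp only [bld, List.cons.injEq, Prod.mk.injEq] at heq
    exact ⟨rfl, by omega⟩
  | [], (g', e') :: q', h, eL, eL', heq => by
    exfalso
    simp only [bld, List.cons.injEq] at heq
    exact bld_ne_nil _ q' eL' heq.2.symm
  | (g, e) :: q, [], h, eL, eL', heq => by
    exfalso
    simp only [bld, List.cons.injEq] at heq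
    exact bld_ne_nil _ q eL heq.2
  | (g, e) :: q, (g', e') :: q', h, eL, eL', heq => by
    simp only [bld, List.cons.injEq, Prod.mk.injEq] at heq
    obtain ⟨⟨h1, h2⟩, h3⟩ := heq
    have hee : e = e' := by omega
    have hgg : g = g' := by omega
    subst hee hgg
    obtain ⟨hq, hL⟩ := bld_inj q q' (h + d + g) eL eL' h3
    exact ⟨by rw [hq], hL⟩

end DyckAux

namespace DyckAux

def PrmS (d K n : ℕ) : Set (ℕ × ℕ × List (ℕ × ℕ) × ℕ) :=
  {x | x.2.2.1.length = K ∧ x.1 + x.2.1 + sumP x.2.2.1 + x.2.2.2 + (K + 2) + K * d = n}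

def bigMap (d : ℕ) (x : ℕ × ℕ × List (ℕ × ℕ) × ℕ) : List (ℕ × ℕ) :=
  bigL d x.1 x.2.1 x.2.2.1 x.2.2.2

lemma cast_head_eq (v1 e1 : ℕ) : (0 : ℤ) + ((v1 + e1 + 1 : ℕ) : ℤ) - ((e1 + 1 : ℕ) : ℤ) = (v1 : ℤ) := by
  push_cast; ring

lemma Lset_eq_image (d K n : ℕ) :
    Lset (d : ℤ) n (K + 2) = bigMap d '' PrmS d K n := by
  ext L
  constructor
  · rintro ⟨hP, hAB, hv, hc, hsum, hlen⟩
    obtain ⟨⟨a, b⟩, L', rfl⟩ : ∃ ab L', L = ab :: L' := by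
      cases L with
      | nil => simp at hlen
      | cons x xs => exact ⟨x, xs, rfl⟩
    have hL'ne : L' ≠ [] := by
      intro hc'
      subst hc'
      simp at hlen
    have ha : 0 < a := (hP _ (List.mem_cons_self)).1
    have hb : 0 < b := (hP _ (List.mem_cons_self)).2
    have hvb : (0:ℤ) ≤ 0 + (a:ℤ) - b := hv _ (by rw [vsums]; exact List.mem_cons_self)
    have hba : b ≤ a := by omega
    set v1 := a - b with hv1
    set e1 := b - 1 with he1
    have hca : (0:ℤ) + (a:ℤ) - b = ((v1 : ℕ) : ℤ) := by push_cast; omega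
    have hvL' : ∀ x ∈ vsums ((v1:ℕ):ℤ) L', 0 ≤ x := by
      intro x hx
      refine hv x ?_
      rw [vsums, List.mem_cons]
      right
      rwa [hca]
    have hcL' : List.Chain' (fun x y => (d : ℤ) ≤ y - x) (((v1:ℕ):ℤ) :: vset ((v1:ℕ):ℤ) L') := by
      rw [← hca]
      rw [vset, if_neg hL'ne] at hc
      exact hc
    have hbalL' : sumB L' = sumA L' + v1 := by
      simp only [sumA, sumB, List.map_cons, List.sum_cons] at hAB ⊢
      omega
    obtain ⟨q, eL, hq⟩ := bld_complete L' v1 hL'ne hP.tail hvL' hcL' hbalL'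
    have hlq : q.length = K := by
      have h5 := congrArg List.length hq
      rw [bld_length] at h5
      simp only [List.length_cons] at hlen
      omega
    refine ⟨(v1, e1, q, eL), ⟨?_, ?_⟩, ?_⟩
    · exact hlq
    · -- sum condition
      have hsA : sumA (bld d v1 q eL) = q.length * (d+1) + sumP q + eL + 1 := bld_sumA q v1 eL
      rw [hlq, Nat.mul_add, Nat.mul_one] at hsA
      simp only [sumA, List.map_cons, List.sum_cons] at hsum
      rw [hq] at hsum
      show v1 + e1 + sumP q + eL + (K + 2) + K * d = n
      simp only [sumA] at hsA
      omega
    · show bigL d v1 e1 q eL = (a, b) :: L'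
      rw [bigL, ← hq]
      congr 1
      have h1 : v1 + e1 + 1 = a := by omega
      have h2 : e1 + 1 = b := by omega
      rw [h1, h2]
  · rintro ⟨⟨v1, e1, q, eL⟩, ⟨hlq, hsum⟩, rfl⟩
    dsimp only [PrmS] at hlq hsum
    have hbne := bld_ne_nil (d := d) v1 q eL
    refine ⟨?_, ?_, ?_, ?_, ?_, ?_⟩
    · intro x hx
      rw [bigMap, bigL, List.mem_cons] at hx
      rcases hx with rfl | hx
      · exact ⟨by omega, by omega⟩
      · exact bld_pos q v1 eL x hx
    · show sumA _ = sumB _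
      rw [bigMap, bigL]
      simp only [sumA, sumB, List.map_cons, List.sum_cons]
      rw [show (List.map Prod.snd (bld d v1 q eL)).sum = sumB (bld d v1 q eL) from rfl,
        bld_sumB q v1 eL]
      simp only [sumA]
      omega
    · intro x hx
      rw [bigMap, bigL, vsums, cast_head_eq] at hx
      rcases List.mem_cons.mp hx with rfl | hx'
      · positivity
      · exact bld_vsums_nonneg q v1 eL x hx'
    · rw [bigMap, bigL, vset, if_neg hbne, cast_head_eq]
      exact bld_chain q v1 eL
    · rw [bigMap, bigL]
      simp only [sumA, List.map_cons, List.sum_cons]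
      rw [show (List.map Prod.fst (bld d v1 q eL)).sum = sumA (bld d v1 q eL) from rfl,
        bld_sumA q v1 eL, hlq, Nat.mul_add, Nat.mul_one]
      omega
    · rw [bigMap, bigL]
      simp [bld_length, hlq]

lemma bigMap_injOn (d K n : ℕ) : Set.InjOn (bigMap d) (PrmS d K n) := by
  rintro ⟨v1, e1, q, eL⟩ _ ⟨v1', e1', q', eL'⟩ _ heq
  simp only [bigMap, bigL, List.cons.injEq, Prod.mk.injEq] at heq
  obtain ⟨⟨h1, h2⟩, h3⟩ := heq
  have he : e1 = e1' := by omega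
  have hvv : v1 = v1' := by omega
  subst he hvv
  obtain ⟨hq, hL⟩ := bld_inj q q' v1 eL eL' h3
  simp [hq, hL]

lemma ncard_Lset_two (d K n : ℕ) :
    (Lset (d : ℤ) n (K + 2)).ncard = (PrmS d K n).ncard := by
  rw [Lset_eq_image]
  exact Set.ncard_image_of_injOn (bigMap_injOn d K n)

end DyckAux

namespace DyckAux

lemma card_msum {β α : Type*} (s : Finset β) (f : β → Multiset α) :
    Multiset.card (∑ b ∈ s, f b) = ∑ b ∈ s, Multiset.card (f b) := by
  induction s using Finset.cons_induction with
  | empty => simp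
  | cons a s ha ih => rw [Finset.sum_cons, Finset.sum_cons, Multiset.card_add, ih]

def sumFunEquivSym (α : Type*) [Fintype α] [DecidableEq α] (m : ℕ) :
    {c : α → ℕ // ∑ i, c i = m} ≃ Sym α m where
  toFun c := ⟨∑ i : α, Multiset.replicate (c.1 i) i, by
    rw [card_msum]; simpa using c.2⟩
  invFun s := ⟨fun i => s.1.count i,
    by rw [Multiset.sum_count_eq_card (fun a _ => Finset.mem_univ a)]; exact s.2⟩
  left_inv := by
    rintro ⟨c, hc⟩
    ext i
    simp only
    rw [Multiset.count_sum']
    rw [Finset.sum_congr rfl (fun j _ => Multiset.count_replicate i j (c j))]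
    simp
  right_inv := by
    rintro ⟨s, hs⟩
    refine Subtype.ext ?_
    simp only
    rw [Finset.sum_congr rfl (fun j (_ : j ∈ Finset.univ) => (Multiset.nsmul_singleton j (s.count j)).symm)]
    rw [← Finset.sum_subset (Finset.subset_univ s.toFinset) (fun x _ hx => by
      rw [Multiset.count_eq_zero_of_notMem (by simpa using hx)]; simp)]
    exact Multiset.toFinset_sum_count_nsmul_eq s

lemma ncard_sum_fun (α : Type) [Fintype α] [DecidableEq α] (m : ℕ) :
    {c : α → ℕ | ∑ i, c i = m}.ncard = Nat.multichoose (Fintype.card α) m := by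
  rw [← Nat.card_coe_set_eq]
  have h1 : Nat.card {c : α → ℕ | ∑ i, c i = m} = Nat.card (Sym α m) :=
    Nat.card_congr (sumFunEquivSym α m)
  rw [h1, Nat.card_eq_fintype_card, Sym.card_sym_eq_multichoose]

/-- the index type for parameters -/
abbrev PIdx (K : ℕ) := Bool ⊕ ((Fin K × Bool) ⊕ Unit)

def theta (K : ℕ) (c : PIdx K → ℕ) : ℕ × ℕ × List (ℕ × ℕ) × ℕ :=
  (c (Sum.inl true), c (Sum.inl false),
    List.ofFn (fun i : Fin K => (c (Sum.inr (Sum.inl (i, true))), c (Sum.inr (Sum.inl (i, false))))),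
    c (Sum.inr (Sum.inr ())))

lemma sum_pidx (K : ℕ) (c : PIdx K → ℕ) :
    ∑ i, c i = c (Sum.inl true) + c (Sum.inl false) +
      (∑ i : Fin K, (c (Sum.inr (Sum.inl (i, true))) + c (Sum.inr (Sum.inl (i, false))))) +
      c (Sum.inr (Sum.inr ())) := by
  rw [Fintype.sum_sum_type, Fintype.sum_sum_type, Fintype.sum_prod_type]
  simp [Fintype.sum_bool]
  ring

lemma sumP_ofFn (K : ℕ) (f : Fin K → ℕ × ℕ) :
    sumP (List.ofFn f) = ∑ i : Fin K, ((f i).1 + (f i).2) := by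
  rw [sumP, List.map_ofFn, List.sum_ofFn]
  rfl

lemma theta_image (d K n m : ℕ) (hm : m + (K + 2) + K * d = n) :
    theta K '' {c : PIdx K → ℕ | ∑ i, c i = m} = PrmS d K n := by
  ext x
  constructor
  · rintro ⟨c, hc, rfl⟩
    rw [Set.mem_setOf_eq] at hc
    refine ⟨by simp [theta], ?_⟩
    dsimp only [PrmS, theta]
    rw [sumP_ofFn]
    dsimp only
    rw [sum_pidx] at hc
    omega
  · rintro ⟨hlen, hsum⟩
    obtain ⟨v1, e1, q, eL⟩ := x
    dsimp only [PrmS] at hlen hsum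
    set c : PIdx K → ℕ := fun i => match i with
      | Sum.inl true => v1
      | Sum.inl false => e1
      | Sum.inr (Sum.inl (i, true)) => (q[i.val]'(by rw [hlen]; exact i.2)).1
      | Sum.inr (Sum.inl (i, false)) => (q[i.val]'(by rw [hlen]; exact i.2)).2
      | Sum.inr (Sum.inr ()) => eL with hcdef
    have hofn : List.ofFn (fun i : Fin K =>
        (c (Sum.inr (Sum.inl (i, true))), c (Sum.inr (Sum.inl (i, false))))) = q := by
      apply List.ext_getElem (by simp [hlen])
      intro i h1 h2
      simp [hcdef]
    refine ⟨c, ?_, ?_⟩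
    · rw [Set.mem_setOf_eq, sum_pidx]
      have h5 := congrArg sumP hofn
      rw [sumP_ofFn] at h5
      have hv1 : c (Sum.inl true) = v1 := rfl
      have he1 : c (Sum.inl false) = e1 := rfl
      have heL : c (Sum.inr (Sum.inr ())) = eL := rfl
      rw [hv1, he1, heL, h5]
      omega
    · rw [theta, hofn]

lemma theta_injOn (K m : ℕ) : Set.InjOn (theta K) {c : PIdx K → ℕ | ∑ i, c i = m} := by
  rintro c _ c' _ heq
  simp only [theta, Prod.mk.injEq] at heq
  obtain ⟨h1, h2, h3, h4⟩ := heq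
  funext i
  match i with
  | Sum.inl true => exact h1
  | Sum.inl false => exact h2
  | Sum.inr (Sum.inr ()) => exact h4
  | Sum.inr (Sum.inl (i, b)) =>
    have := List.ofFn_injective h3
    have hi := congrFun this i
    simp only [Prod.mk.injEq] at hi
    cases b
    · exact hi.2
    · exact hi.1

lemma card_pidx (K : ℕ) : Fintype.card (PIdx K) = 2 * K + 3 := by
  simp [PIdx]
  omega

lemma ncard_PrmS (d K n : ℕ) :
    (PrmS d K n).ncard = (n + K - K * d).choose (2 * K + 2) := by
  rcases Decidable.em ((K + 2) + K * d ≤ n) with hge | hlt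
  · obtain ⟨m, hm⟩ : ∃ m, m + (K + 2) + K * d = n := ⟨n - ((K+2) + K*d), by omega⟩
    rw [← theta_image d K n m hm, Set.ncard_image_of_injOn (theta_injOn K m),
      ncard_sum_fun _ m, card_pidx, Nat.multichoose_eq]
    have h1 : 2 * K + 3 + m - 1 = m + (2 * K + 2) := by omega
    rw [h1]
    have h2 : n + K - K * d = m + (2 * K + 2) := by omega
    rw [h2, ← Nat.choose_symm (by omega : m ≤ m + (2*K+2))]
    congr 1
    omega
  · have hempty : PrmS d K n = ∅ := by
      ext x
      simp only [PrmS, Set.mem_setOf_eq, Set.mem_empty_iff_false, iff_false]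
      rintro ⟨_, hsum⟩
      omega
    rw [hempty, Set.ncard_empty, Nat.choose_eq_zero_of_lt (by omega)]

end DyckAux

namespace DyckAux

def Bco (d : ℕ) : ℕ → ℕ → ℕ
  | _, 0 => 0
  | n, 1 => if n = 0 then 0 else 1
  | n, (K+2) => (n + K - K * d).choose (2 * K + 2)

lemma Bco_zero (d n : ℕ) : Bco d n 0 = 0 := rfl
lemma Bco_one' (d n : ℕ) : Bco d n 1 = if n = 0 then 0 else 1 := rfl
lemma Bco_two' (d n K : ℕ) : Bco d n (K+2) = (n + K - K * d).choose (2 * K + 2) := rfl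

def cho (x : ℤ) (r : ℕ) : ℕ := if 0 ≤ x then x.toNat.choose r else 0

lemma cho_neg {x : ℤ} (hx : x < 0) (r : ℕ) : cho x r = 0 := by
  rw [cho, if_neg (by omega)]

lemma cho_lt {x : ℤ} {r : ℕ} (hx : x < r) : cho x r = 0 := by
  rcases le_or_gt 0 x with h | h
  · rw [cho, if_pos h]
    exact Nat.choose_eq_zero_of_lt (by omega)
  · exact cho_neg h r

lemma cho_zero (x : ℤ) : cho x 0 = if 0 ≤ x then 1 else 0 := by
  rw [cho]
  split_ifs <;> simp

lemma cho_pascal (x : ℤ) (r : ℕ) : cho (x + 1) (r + 1) = cho x r + cho x (r + 1) := by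
  rcases lt_trichotomy x (-1) with h | h | h
  · rw [cho_neg (show x + 1 < 0 by omega), cho_neg (show x < 0 by omega),
      cho_neg (show x < 0 by omega)]
  · subst h
    rw [cho_neg (show (-1:ℤ) < 0 by omega), cho_neg (show (-1:ℤ) < 0 by omega)]
    show cho 0 (r+1) = 0
    rw [cho, if_pos le_rfl]
    simp
  · have hx : 0 ≤ x := by omega
    rw [cho, cho, cho, if_pos (by omega), if_pos hx, if_pos hx]
    have ht : (x + 1).toNat = x.toNat + 1 := by omega
    rw [ht, Nat.choose_succ_succ]

lemma Bco_one (d n : ℕ) : Bco d n 1 = cho ((n : ℤ) - 1) 0 := by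
  rw [Bco_one', cho_zero]
  split_ifs <;> omega

lemma Bco_two (d n K : ℕ) : Bco d n (K + 2) = cho ((n : ℤ) + K - K * d) (2 * K + 2) := by
  rw [Bco_two']
  rcases le_or_gt ((K * d : ℕ)) (n + K) with h | h
  · rw [cho, if_pos (by push_cast; omega)]
    congr 1
    push_cast
    omega
  · rw [cho_neg (show (n:ℤ) + K - K * d < 0 by push_cast; omega)]
    rw [show n + K - K * d = 0 from by omega]
    exact Nat.choose_eq_zero_of_lt (by omega)

lemma guard_two (d n K s : ℕ) :
    (if s ≤ n then Bco d (n - s) (K + 2) else 0) = cho ((n : ℤ) - s + K - K * d) (2 * K + 2) := by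
  rcases le_or_gt s n with h | h
  · rw [if_pos h, Bco_two]
    congr 1
    push_cast
    omega
  · rw [if_neg (by omega)]
    refine (cho_lt ?_).symm
    have hkd : (0:ℤ) ≤ (K:ℤ) * (d:ℤ) := by positivity
    push_cast
    omega

lemma guard_one (d n s : ℕ) :
    (if s ≤ n then Bco d (n - s) 1 else 0) = cho ((n : ℤ) - s - 1) 0 := by
  rcases le_or_gt s n with h | h
  · rw [if_pos h, Bco_one]
    congr 1
    push_cast
    omega
  · rw [if_neg (by omega), cho_neg (show (n:ℤ) - s - 1 < 0 by push_cast; omega) 0]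

lemma cube (N : ℤ) (K : ℕ) :
    cho N (2*K+4) + 3 * cho (N-2) (2*K+4) + cho (N-3) (2*K+2) =
      3 * cho (N-1) (2*K+4) + cho (N-3) (2*K+4) + cho (N-2) (2*K+2) := by
  have d1 := cho_pascal (N-1) (2*K+3)
  rw [sub_add_cancel, show 2*K+3+1 = 2*K+4 from rfl] at d1
  have d2 := cho_pascal (N-2) (2*K+3)
  rw [show N-2+1 = N-1 from by ring, show 2*K+3+1 = 2*K+4 from rfl] at d2
  have d3 := cho_pascal (N-3) (2*K+3)
  rw [show N-3+1 = N-2 from by ring, show 2*K+3+1 = 2*K+4 from rfl] at d3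
  have d4 := cho_pascal (N-2) (2*K+2)
  rw [show N-2+1 = N-1 from by ring, show 2*K+2+1 = 2*K+3 from rfl] at d4
  have d5 := cho_pascal (N-3) (2*K+2)
  rw [show N-3+1 = N-2 from by ring, show 2*K+2+1 = 2*K+3 from rfl] at d5
  have d6 := cho_pascal (N-3) (2*K+1)
  rw [show N-3+1 = N-2 from by ring, show 2*K+1+1 = 2*K+2 from rfl] at d6
  omega

lemma k2a (x : ℤ) :
    cho x 2 + 3 * cho (x-2) 2 + cho (x-3) 0 = 3 * cho (x-1) 2 + cho (x-3) 2 + cho (x-2) 0 := by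
  have p1 := cho_pascal (x-1) 1
  rw [sub_add_cancel, show (1:ℕ)+1 = 2 from rfl] at p1
  have p2 := cho_pascal (x-2) 1
  rw [show x-2+1 = x-1 from by ring, show (1:ℕ)+1 = 2 from rfl] at p2
  have p3 := cho_pascal (x-3) 1
  rw [show x-3+1 = x-2 from by ring, show (1:ℕ)+1 = 2 from rfl] at p3
  have q1 := cho_pascal (x-2) 0
  rw [show x-2+1 = x-1 from by ring, show (0:ℕ)+1 = 1 from rfl] at q1
  have q2 := cho_pascal (x-3) 0
  rw [show x-3+1 = x-2 from by ring, show (0:ℕ)+1 = 1 from rfl] at q2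
  omega

lemma cho_step (y : ℤ) : cho y 0 = cho (y-1) 0 + (if y = 0 then 1 else 0) := by
  rw [cho_zero, cho_zero]
  split_ifs <;> omega

lemma keyNat (d n k : ℕ) :
    Bco d n k
    + 3 * (if 2 ≤ n then Bco d (n - 2) k else 0)
    + (if d + 2 ≤ n ∧ 1 ≤ k then Bco d (n - (d + 2)) (k - 1) else 0)
    + 2 * (if n = 2 ∧ k = 1 then 1 else 0)
    + (if n = d + 2 ∧ k = 2 then 1 else 0)
    = 3 * (if 1 ≤ n then Bco d (n - 1) k else 0)
    + (if 3 ≤ n then Bco d (n - 3) k else 0)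
    + (if d + 1 ≤ n ∧ 1 ≤ k then Bco d (n - (d + 1)) (k - 1) else 0)
    + (if n = 1 ∧ k = 1 then 1 else 0)
    + (if n = 3 ∧ k = 1 then 1 else 0)
    + (if n = 2 ∧ k = 2 then 1 else 0) := by
  match k with
  | 0 =>
    simp [Bco_zero]
  | 1 =>
    have hA1 := Bco_one d n
    have hA2 : (if 1 ≤ n then Bco d (n - 1) 1 else 0) = cho ((n:ℤ) - 2) 0 :=
      (guard_one d n 1).trans (by congr 1; push_cast; ring)
    have hA3 : (if 2 ≤ n then Bco d (n - 2) 1 else 0) = cho ((n:ℤ) - 3) 0 :=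
      (guard_one d n 2).trans (by congr 1; push_cast; ring)
    have hA4 : (if 3 ≤ n then Bco d (n - 3) 1 else 0) = cho ((n:ℤ) - 4) 0 :=
      (guard_one d n 3).trans (by congr 1; push_cast; ring)
    simp only [show (1:ℕ)-1 = 0 from rfl, Bco_zero, ite_self, le_refl, and_true,
      eq_false (by omega : ¬((1:ℕ) = 2)), eq_false (by omega : ¬((2:ℕ) = 1)), and_false,
      if_false, add_zero, zero_add]
    rw [hA1, hA2, hA3, hA4]
    simp only [cho_zero]
    split_ifs <;> omega
  | 2 =>
    have hA1 : Bco d n 2 = cho ((n:ℤ)) 2 :=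
      (Bco_two d n 0).trans (by congr 1 <;> (try push_cast) <;> ring)
    have hA2 : (if 1 ≤ n then Bco d (n - 1) 2 else 0) = cho ((n:ℤ) - 1) 2 :=
      (guard_two d n 0 1).trans (by congr 1 <;> (try push_cast) <;> ring)
    have hA3 : (if 2 ≤ n then Bco d (n - 2) 2 else 0) = cho ((n:ℤ) - 2) 2 :=
      (guard_two d n 0 2).trans (by congr 1 <;> (try push_cast) <;> ring)
    have hA4 : (if 3 ≤ n then Bco d (n - 3) 2 else 0) = cho ((n:ℤ) - 3) 2 :=
      (guard_two d n 0 3).trans (by congr 1 <;> (try push_cast) <;> ring)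
    have hA5 : (if d + 1 ≤ n then Bco d (n - (d + 1)) 1 else 0) = cho ((n:ℤ) - d - 2) 0 :=
      (guard_one d n (d+1)).trans (by congr 1; push_cast; ring)
    have hA6 : (if d + 2 ≤ n then Bco d (n - (d + 2)) 1 else 0) = cho ((n:ℤ) - d - 3) 0 :=
      (guard_one d n (d+2)).trans (by congr 1; push_cast; ring)
    simp only [show (2:ℕ)-1 = 1 from rfl, show ((1:ℕ) ≤ 2) from by omega, and_true,
      eq_false (by omega : ¬((2:ℕ) = 1)), and_false, if_false, add_zero, zero_add]
    rw [hA1, hA2, hA3, hA4, hA5, hA6]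
    have hk2 := k2a (n:ℤ)
    have hs1 := cho_step ((n:ℤ) - 2)
    rw [show (n:ℤ)-2-1 = (n:ℤ)-3 from by ring] at hs1
    have hs2 := cho_step ((n:ℤ) - d - 2)
    rw [show (n:ℤ)-d-2-1 = (n:ℤ)-d-3 from by ring] at hs2
    have hi1 : ((n:ℤ) - 2 = 0) = (n = 2) := by
      apply propext; omega
    have hi2 : ((n:ℤ) - d - 2 = 0) = (n = d + 2) := by
      apply propext; omega
    simp only [hi1] at hs1
    simp only [hi2] at hs2
    omega
  | (K+3) =>
    have hA1 : Bco d n (K+3) = cho ((n:ℤ) + K + 1 - (K + 1) * d) (2*K+4) :=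
      (Bco_two d n (K+1)).trans (by congr 1 <;> (try push_cast) <;> ring)
    have hA2 : (if 1 ≤ n then Bco d (n - 1) (K+3) else 0) =
        cho ((n:ℤ) + K + 1 - (K + 1) * d - 1) (2*K+4) := by
      have := guard_two d n (K+1) 1
      rw [show (K+1)+2 = K+3 from rfl] at this
      exact this.trans (by congr 1 <;> (try push_cast) <;> ring)
    have hA3 : (if 2 ≤ n then Bco d (n - 2) (K+3) else 0) =
        cho ((n:ℤ) + K + 1 - (K + 1) * d - 2) (2*K+4) := by
      have := guard_two d n (K+1) 2
      rw [show (K+1)+2 = K+3 from rfl] at this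
      exact this.trans (by congr 1 <;> (try push_cast) <;> ring)
    have hA4 : (if 3 ≤ n then Bco d (n - 3) (K+3) else 0) =
        cho ((n:ℤ) + K + 1 - (K + 1) * d - 3) (2*K+4) := by
      have := guard_two d n (K+1) 3
      rw [show (K+1)+2 = K+3 from rfl] at this
      exact this.trans (by congr 1 <;> (try push_cast) <;> ring)
    have hA5 : (if d + 1 ≤ n then Bco d (n - (d + 1)) (K+2) else 0) =
        cho ((n:ℤ) + K + 1 - (K + 1) * d - 2) (2*K+2) :=
      (guard_two d n K (d+1)).trans (by congr 1 <;> (try push_cast) <;> ring)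
    have hA6 : (if d + 2 ≤ n then Bco d (n - (d + 2)) (K+2) else 0) =
        cho ((n:ℤ) + K + 1 - (K + 1) * d - 3) (2*K+2) :=
      (guard_two d n K (d+2)).trans (by congr 1 <;> (try push_cast) <;> ring)
    simp only [show (K+3)-1 = K+2 from rfl, show ((1:ℕ) ≤ K+3) from by omega, and_true,
      eq_false (by omega : ¬(K+3 = 1)), eq_false (by omega : ¬(K+3 = 2)), and_false, if_false,
      add_zero, zero_add]
    rw [hA1, hA2, hA3, hA4, hA5, hA6]
    have hcube := cube ((n:ℤ) + K + 1 - (K + 1) * d) K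
    rw [show ((n:ℤ) + K + 1 - (K + 1) * d) - 1 = (n:ℤ) + K + 1 - (K + 1) * d - 1 from rfl] at hcube
    omega

end DyckAux

namespace DyckAux

open MvPowerSeries

lemma ncard_Sset_eq (d n k : ℕ) :
    (Sset ((d : ℕ) : ℤ) n k).ncard = Bco d n k + (if n = 0 ∧ k = 0 then 1 else 0) := by
  match k with
  | 0 =>
    rw [ncard_Sset, Lset_zero]
    rcases Decidable.em (n = 0) with rfl | hn
    · simp [Bco_zero]
    · simp [Bco_zero, hn]
  | 1 =>
    rw [ncard_Sset, Lset_one]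
    rcases Decidable.em (n = 0) with rfl | hn
    · simp [Bco_one']
    · simp [Bco_one', hn]
  | (K+2) =>
    rw [ncard_Sset, ncard_Lset_two, ncard_PrmS, Bco_two']
    simp

lemma fin2_finsupp_eq_zero_iff (m : Fin 2 →₀ ℕ) : m = 0 ↔ m 0 = 0 ∧ m 1 = 0 := by
  constructor
  · rintro rfl; simp
  · intro ⟨h0, h1⟩
    ext s
    fin_cases s
    · exact h0
    · exact h1

lemma coeff_LB (d : ℕ) (m : Fin 2 →₀ ℕ) :
    coeff m (Lbiv ((d : ℕ) : ℤ) - 1) = (Bco d (m 0) (m 1) : ℚ) := by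
  rw [map_sub, coeff_one]
  have h1 : coeff m (Lbiv ((d : ℕ) : ℤ)) = ((Sset ((d:ℕ):ℤ) (m 0) (m 1)).ncard : ℚ) := rfl
  rw [h1, ncard_Sset_eq]
  rcases Decidable.em (m 0 = 0 ∧ m 1 = 0) with h | h
  · rw [if_pos h, if_pos ((fin2_finsupp_eq_zero_iff m).2 h)]
    push_cast
    ring
  · rw [if_neg h, if_neg (fun hh => h ((fin2_finsupp_eq_zero_iff m).1 hh))]
    push_cast
    ring

lemma e_apply0 (i j : ℕ) :
    (Finsupp.single (0 : Fin 2) i + Finsupp.single (1 : Fin 2) j) 0 = i := by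
  rw [Finsupp.add_apply, Finsupp.single_eq_same, Finsupp.single_eq_of_ne (by decide), add_zero]

lemma e_apply1 (i j : ℕ) :
    (Finsupp.single (0 : Fin 2) i + Finsupp.single (1 : Fin 2) j) 1 = j := by
  rw [Finsupp.add_apply, Finsupp.single_eq_same, Finsupp.single_eq_of_ne (by decide), zero_add]

lemma le_iff_e (i j : ℕ) (m : Fin 2 →₀ ℕ) :
    Finsupp.single (0 : Fin 2) i + Finsupp.single (1 : Fin 2) j ≤ m ↔ i ≤ m 0 ∧ j ≤ m 1 := by
  rw [Finsupp.le_def]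
  constructor
  · intro h
    exact ⟨by simpa [e_apply0] using h 0, by simpa [e_apply1] using h 1⟩
  · intro ⟨h0, h1⟩ s
    fin_cases s
    · simpa [e_apply0] using h0
    · simpa [e_apply1] using h1

lemma eq_e_iff (i j : ℕ) (m : Fin 2 →₀ ℕ) :
    m = Finsupp.single (0 : Fin 2) i + Finsupp.single (1 : Fin 2) j ↔ m 0 = i ∧ m 1 = j := by
  constructor
  · rintro rfl
    exact ⟨e_apply0 i j, e_apply1 i j⟩
  · intro ⟨h0, h1⟩
    ext s
    fin_cases s
    · simpa [e_apply0] using h0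
    · simpa [e_apply1] using h1

lemma coeff_XXB (i j : ℕ) (φ : MvPowerSeries (Fin 2) ℚ) (m : Fin 2 →₀ ℕ) :
    coeff m (X 0 ^ i * X 1 ^ j * φ) =
      if i ≤ m 0 ∧ j ≤ m 1 then
        coeff (m - (Finsupp.single (0 : Fin 2) i + Finsupp.single (1 : Fin 2) j)) φ
      else 0 := by
  rw [X_pow_eq, X_pow_eq, monomial_mul_monomial, one_mul, coeff_monomial_mul, one_mul]
  rcases Decidable.em (i ≤ m 0 ∧ j ≤ m 1) with h | h
  · rw [if_pos ((le_iff_e i j m).2 h), if_pos h]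
  · rw [if_neg (fun hh => h ((le_iff_e i j m).1 hh)), if_neg h]

lemma coeff_XX (i j : ℕ) (m : Fin 2 →₀ ℕ) :
    coeff m ((X 0 : MvPowerSeries (Fin 2) ℚ) ^ i * X 1 ^ j) =
      if m 0 = i ∧ m 1 = j then 1 else 0 := by
  rw [X_pow_eq, X_pow_eq, monomial_mul_monomial, one_mul, coeff_monomial]
  rcases Decidable.em (m 0 = i ∧ m 1 = j) with h | h
  · rw [if_pos ((eq_e_iff i j m).2 h), if_pos h]
  · rw [if_neg (fun hh => h ((eq_e_iff i j m).1 hh)), if_neg h]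

lemma keyQ (d n k : ℕ) :
    (Bco d n k : ℚ)
    - 3 * (if 1 ≤ n then (Bco d (n - 1) k : ℚ) else 0)
    + 3 * (if 2 ≤ n then (Bco d (n - 2) k : ℚ) else 0)
    - (if 3 ≤ n then (Bco d (n - 3) k : ℚ) else 0)
    - (if d + 1 ≤ n ∧ 1 ≤ k then (Bco d (n - (d + 1)) (k - 1) : ℚ) else 0)
    + (if d + 2 ≤ n ∧ 1 ≤ k then (Bco d (n - (d + 2)) (k - 1) : ℚ) else 0)
    = (if n = 1 ∧ k = 1 then 1 else 0)
    - 2 * (if n = 2 ∧ k = 1 then 1 else 0)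
    + (if n = 3 ∧ k = 1 then 1 else 0)
    + (if n = 2 ∧ k = 2 then 1 else 0)
    - (if n = d + 2 ∧ k = 2 then 1 else 0) := by
  have h := keyNat d n k
  have h2 := congrArg (Nat.cast : ℕ → ℚ) h
  push_cast [apply_ite (Nat.cast : ℕ → ℚ)] at h2
  linarith

lemma series_identity (d : ℕ) (B : MvPowerSeries (Fin 2) ℚ)
    (hB : ∀ m : Fin 2 →₀ ℕ, coeff m B = (Bco d (m 0) (m 1) : ℚ)) :
    (1 - X 0) * (1 - 2 * X 0 + X 0 ^ 2 - X 0 ^ (d + 1) * X 1) * B =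
      X 0 * X 1 * ((1 : MvPowerSeries (Fin 2) ℚ) - 2 * X 0 + X 0 ^ 2 +
        X 0 * X 1 - X 0 ^ (d + 1) * X 1) := by
  have hpoly : (1 - X 0) * (1 - 2 * X 0 + X 0 ^ 2 - X 0 ^ (d + 1) * X 1) * B =
      B - (C (σ := Fin 2) (R := ℚ)) 3 * (X 0 ^ 1 * X 1 ^ 0 * B) + (C (σ := Fin 2) (R := ℚ)) 3 * (X 0 ^ 2 * X 1 ^ 0 * B)
        - X 0 ^ 3 * X 1 ^ 0 * B - X 0 ^ (d + 1) * X 1 ^ 1 * B + X 0 ^ (d + 2) * X 1 ^ 1 * B := by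
    have hC : (C (σ := Fin 2) (R := ℚ)) 3 = 3 := by
      simp [map_ofNat]
    rw [hC]
    ring
  have hrhs : X 0 * X 1 * ((1 : MvPowerSeries (Fin 2) ℚ) - 2 * X 0 + X 0 ^ 2 +
      X 0 * X 1 - X 0 ^ (d + 1) * X 1) =
      X 0 ^ 1 * X 1 ^ 1 - (C (σ := Fin 2) (R := ℚ)) 2 * (X 0 ^ 2 * X 1 ^ 1) + X 0 ^ 3 * X 1 ^ 1
        + X 0 ^ 2 * X 1 ^ 2 - X 0 ^ (d + 2) * X 1 ^ 2 := by
    have hC : (C (σ := Fin 2) (R := ℚ)) 2 = 2 := by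
      simp [map_ofNat]
    rw [hC]
    ring
  rw [hpoly, hrhs]
  apply MvPowerSeries.ext
  intro m
  simp only [map_sub, map_add, coeff_C_mul, coeff_XXB, coeff_XX, hB,
    Finsupp.tsub_apply, e_apply0, e_apply1, Nat.zero_le, and_true, true_and, Nat.sub_zero]
  exact keyQ d (m 0) (m 1)

end DyckAux

/-- For `d ≥ 0`,
`L_d(x,y) = 1 + xy(1-2x+x²+xy-x^{d+1}y) / ((1-x)(1-2x+x²-x^{d+1}y))`,
stated with denominators cleared, in `ℚ[[x,y]]`. -/
theorem Lbiv_formula (d : ℕ) :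
    (1 - X (0 : Fin 2)) *
        (1 - 2 * X 0 + X 0 ^ 2 - X 0 ^ (d + 1) * X 1) * (Lbiv (d : ℤ) - 1) =
      X 0 * X 1 * ((1 : MvPowerSeries (Fin 2) ℚ) - 2 * X 0 + X 0 ^ 2 +
        X 0 * X 1 - X 0 ^ (d + 1) * X 1) :=
  DyckAux.series_identity d (Lbiv (d : ℤ) - 1) (DyckAux.coeff_LB d)
end

section
/- Let q_n be the number of (−1)-Dyck paths of semi-length n with at least one valley whose last valley is at ground level, and let b(n) = q_n + 1 for n ≥ 1 with b(0) = 1 (counting also the pyramid U^nD^n and the empty path). Then Σ_{n≥0} b(n)x^n equals (1 − x² − √(1 − 4x + 2x² + x⁴)) / (2x(1−x)) as formal power series; equivalently, B(x) = Σ b(n)x^n satisfies x(1−x)·B(x)² − (1 − x²)·B(x) + (1 − x) = 0. -/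
/-- The path has no valleys, or its last valley is at ground level. -/
def NoValleyOrLastGround (p : List Bool) : Prop :=
  valleyLevels p = [] ∨ (valleyLevels p).getLast? = some 0

/-- `bCount n` = number of `(-1)`-Dyck paths of semi-length `n` having either
no valleys or last valley at ground level. -/
noncomputable def bCount (n : ℕ) : ℕ :=
  {p : List Bool | IsDyck p ∧ semilength p = n ∧ RestrictedD (-1) p ∧
    NoValleyOrLastGround p}.ncard

/-- `qCount n` = number of `(-1)`-Dyck paths of semi-length `n` having at least
one valley, with the last valley at ground level. -/
noncomputable def qCount (n : ℕ) : ℕ :=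
  {p : List Bool | IsDyck p ∧ semilength p = n ∧ RestrictedD (-1) p ∧
    (valleyLevels p).getLast? = some 0}.ncard

namespace DyckProof


/-- Total height change of a path. -/
def H (p : List Bool) : ℤ := (p.map stepVal).sum

@[simp] lemma H_nil : H [] = 0 := rfl

@[simp] lemma H_cons (a : Bool) (p : List Bool) : H (a :: p) = stepVal a + H p := by
  simp [H]

@[simp] lemma H_append (p q : List Bool) : H (p ++ q) = H p + H q := by
  simp [H]

lemma H_eq_counts (p : List Bool) :
    H p = (p.count true : ℤ) - (p.count false : ℤ) := by
  induction p with
  | nil => simp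
  | cons a p ih =>
    cases a <;> simp [ih, List.count_cons, stepVal] <;> push_cast <;> ring

lemma scanl_shift (p : List Bool) (c : ℤ) :
    p.scanl (fun h b => h + stepVal b) c = (heights p).map (c + ·) := by
  induction p generalizing c with
  | nil => simp [heights]
  | cons a p ih =>
    unfold heights
    rw [List.scanl_cons, List.scanl_cons, ih, ih]
    simp only [List.map_append, List.map_map, List.map_cons, List.map_nil]
    congr 1
    · simp
    · apply List.map_congr_left; intro x _; simp [Function.comp]; ring

lemma heights_eq (p : List Bool) :
    heights p = (List.range (p.length + 1)).map (fun j => H (p.take j)) := by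
  induction p with
  | nil => simp [heights, H]
  | cons a p ih =>
    unfold heights
    rw [List.scanl_cons, scanl_shift, List.range_succ_eq_map]
    simp only [List.length_cons, List.map_cons, List.take_zero, List.map_map]
    rw [ih]
    simp [List.map_map, Function.comp, H]

lemma H_take_mem_heights (p : List Bool) (j : ℕ) : H (p.take j) ∈ heights p := by
  rcases le_or_gt j p.length with h | h
  · rw [heights_eq]
    exact List.mem_map.2 ⟨j, List.mem_range.2 (by omega), rfl⟩
  · rw [List.take_of_length_le h.le, heights_eq]
    exact List.mem_map.2 ⟨p.length, List.mem_range.2 (by omega), by rw [List.take_length]⟩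

lemma isDyck_iff (p : List Bool) :
    IsDyck p ↔ H p = 0 ∧ ∀ j, 0 ≤ H (p.take j) := by
  constructor
  · rintro ⟨hc, hh⟩
    have h0 : H p = 0 := by
      rw [H_eq_counts, hc]; ring
    exact ⟨h0, fun j => hh _ (H_take_mem_heights p j)⟩
  · rintro ⟨h0, hh⟩
    constructor
    · rw [H_eq_counts] at h0
      have := sub_eq_zero.mp h0
      exact_mod_cast this
    · intro h hm
      rw [heights_eq] at hm
      obtain ⟨j, _, rfl⟩ := List.mem_map.1 hm
      exact hh j

lemma dyck_H {p : List Bool} (hp : IsDyck p) : H p = 0 := ((isDyck_iff p).1 hp).1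

lemma dyck_take_nonneg {p : List Bool} (hp : IsDyck p) (j : ℕ) : 0 ≤ H (p.take j) :=
  ((isDyck_iff p).1 hp).2 j

lemma H_take_append (q r : List Bool) (j : ℕ) :
    H ((q ++ r).take j) = H (q.take j) + H (r.take (j - q.length)) := by
  rw [List.take_append, H_append]

lemma isDyck_append {q r : List Bool} (hq : IsDyck q) (hr : IsDyck r) : IsDyck (q ++ r) := by
  rw [isDyck_iff] at *
  refine ⟨by simp [hq.1, hr.1], fun j => ?_⟩
  rw [H_take_append]
  exact add_nonneg (hq.2 j) (hr.2 _)

lemma H_take_singleton_false (m : ℕ) : -1 ≤ H (List.take m [false]) := by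
  cases m <;> simp [stepVal]

lemma isDyck_UaD {a : List Bool} (ha : IsDyck a) : IsDyck (true :: a ++ [false]) := by
  rw [isDyck_iff] at *
  constructor
  · simp [ha.1, stepVal]
  · intro j
    cases j with
    | zero => simp
    | succ i =>
      rw [List.cons_append, List.take_succ_cons, H_cons, H_take_append]
      have h1 := ha.2 i
      have h2 := H_take_singleton_false (i - a.length)
      simp only [stepVal, if_true]
      linarith


lemma H_take_decomp (p : List Bool) (k j : ℕ) (hkl : k ≤ p.length) :
    H (p.take (k + j)) = H (p.take k) + H ((p.drop k).take j) := by
  conv_lhs => rw [← List.take_append_drop k p]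
  rw [H_take_append, List.take_take, Nat.min_eq_right (Nat.le_add_right k j),
    List.length_take, Nat.min_eq_left hkl, Nat.add_sub_cancel_left]

/-- A primitive (irreducible) path: nonempty, strictly positive strictly inside. -/
def Prim (r : List Bool) : Prop :=
  r ≠ [] ∧ ∀ j, 0 < j → j < r.length → 0 < H (r.take j)

lemma unique_split_aux {q q' r r' : List Bool} (h : q ++ r = q' ++ r')
    (hq : H q = 0) (hq' : H q' = 0) (hr : Prim r) (hr' : r' ≠ [])
    (hle : q.length ≤ q'.length) : q = q' := by
  have hpre : q' = q ++ q'.drop q.length := by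
    have h1 : q = q'.take q.length := by
      have h2 := congrArg (List.take q.length) h
      rwa [List.take_left, List.take_append,
        Nat.sub_eq_zero_of_le hle, List.take_zero, List.append_nil] at h2
    conv_lhs => rw [← List.take_append_drop q.length q', ← h1]
  set m := q'.drop q.length with hm
  rcases eq_or_ne m [] with hm0 | hm0
  · rw [hpre, hm0, List.append_nil]
  · exfalso
    have hrm : r = m ++ r' := by
      rw [hpre, List.append_assoc] at h
      exact List.append_cancel_left h
    have hHm : H m = 0 := by
      have h2 := hq'
      rw [hpre, H_append, hq] at h2
      linarith
    have hlen : m.length < r.length := by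
      rw [hrm, List.length_append]
      have : 0 < r'.length := List.length_pos_iff.2 hr'
      omega
    have hpos : 0 < H (r.take m.length) := hr.2 _ (List.length_pos_iff.2 hm0) hlen
    rw [hrm, List.take_left] at hpos
    omega

lemma unique_split {q q' r r' : List Bool} (h : q ++ r = q' ++ r')
    (hq : H q = 0) (hq' : H q' = 0) (hr : Prim r) (hr' : Prim r') :
    q = q' ∧ r = r' := by
  have hqq : q = q' := by
    rcases le_total q.length q'.length with hle | hle
    · exact unique_split_aux h hq hq' hr hr'.1 hle
    · exact (unique_split_aux h.symm hq' hq hr' hr.1 hle).symm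
  subst hqq
  exact ⟨rfl, List.append_cancel_left h⟩

/-- The pyramid `U^a D^a`. -/
def pyr (a : ℕ) : List Bool := List.replicate a true ++ List.replicate a false

@[simp] lemma H_replicate_true (n : ℕ) : H (List.replicate n true) = n := by
  induction n with
  | zero => simp
  | succ n ih => rw [List.replicate_succ, H_cons, ih]; simp [stepVal]; ring

@[simp] lemma H_replicate_false (n : ℕ) : H (List.replicate n false) = -n := by
  induction n with
  | zero => simp
  | succ n ih => rw [List.replicate_succ, H_cons, ih]; simp [stepVal]

@[simp] lemma H_pyr (a : ℕ) : H (pyr a) = 0 := by simp [pyr]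

@[simp] lemma length_pyr (a : ℕ) : (pyr a).length = 2 * a := by simp [pyr]; ring

lemma isDyck_pyr (a : ℕ) : IsDyck (pyr a) := by
  rw [isDyck_iff]
  refine ⟨by simp, fun j => ?_⟩
  unfold pyr
  rw [H_take_append, List.take_replicate, List.take_replicate, H_replicate_true,
    H_replicate_false, List.length_replicate]
  have h1 : min j a ≤ a := min_le_right _ _
  have h2 : min (j - a) a ≤ min j a := by omega
  push_cast
  omega

lemma prim_pyr {a : ℕ} (ha : 0 < a) : Prim (pyr a) := by
  constructor
  · simp [pyr]; omega
  · intro j hj hjl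
    rw [length_pyr] at hjl
    unfold pyr
    rw [H_take_append, List.take_replicate, List.take_replicate, H_replicate_true,
      H_replicate_false, List.length_replicate]
    push_cast
    omega

lemma prim_UaD {a : List Bool} (ha : IsDyck a) : Prim (true :: a ++ [false]) := by
  constructor
  · simp
  · intro j hj hjl
    have hlen : (true :: a ++ [false]).length = a.length + 2 := by simp
    rw [hlen] at hjl
    obtain ⟨i, rfl⟩ : ∃ i, j = i + 1 := ⟨j - 1, by omega⟩
    rw [List.cons_append, List.take_succ_cons, H_cons, H_take_append]
    have h1 := dyck_take_nonneg ha i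
    have h2 : i - a.length = 0 := by omega
    rw [h2]
    simp only [List.take_zero, H_nil, stepVal, if_true]
    linarith

lemma isDyck_take_drop {p : List Bool} (hp : IsDyck p) {k : ℕ} (hkl : k ≤ p.length)
    (hk : H (p.take k) = 0) : IsDyck (p.take k) ∧ IsDyck (p.drop k) := by
  rw [isDyck_iff, isDyck_iff]
  have hpH := dyck_H hp
  have hdH : H (p.drop k) = 0 := by
    have h2 := congrArg H (List.take_append_drop k p)
    rw [H_append, hk] at h2
    linarith
  refine ⟨⟨hk, fun j => ?_⟩, ⟨hdH, fun j => ?_⟩⟩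
  · rw [List.take_take]
    exact dyck_take_nonneg hp _
  · have h3 := dyck_take_nonneg hp (k + j)
    rwa [H_take_decomp p k j hkl, hk, zero_add] at h3

lemma primDyck_eq_UaD {r : List Bool} (hrD : IsDyck r) (hlen2 : 2 ≤ r.length)
    (hrpos : ∀ j, 0 < j → j < r.length → 0 < H (r.take j)) :
    ∃ a, IsDyck a ∧ r = true :: a ++ [false] := by
  rcases r with _ | ⟨x, s⟩
  · simp at hlen2
  have hsne : s ≠ [] := by
    intro h; subst h; simp at hlen2
  have hx : x = true := by
    have h1 := hrpos 1 one_pos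
      (by rw [List.length_cons]; have := List.length_pos_iff.2 hsne; omega)
    rw [show List.take 1 (x :: s) = [x] from rfl] at h1
    rcases x with _ | _
    · exfalso; simp [stepVal] at h1
    · rfl
  subst hx
  set a := s.dropLast with hadef
  have hs : s = a ++ [s.getLast hsne] := (List.dropLast_append_getLast hsne).symm
  have hHr : stepVal true + (H a + stepVal (s.getLast hsne)) = 0 := by
    have h2 := dyck_H hrD
    rw [hs] at h2
    simpa using h2
  have hlen : (true :: s).length = a.length + 2 := by
    conv_lhs => rw [hs]
    simp
  have htake : 0 < H ((true :: s).take (a.length + 1)) :=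
    hrpos _ (by omega) (by omega)
  have h7 : (true :: s).take (a.length + 1) = true :: a := by
    conv_lhs => rw [hs]
    rw [List.take_succ_cons, List.take_left]
  rw [h7, H_cons] at htake
  have hyval : s.getLast hsne = false := by
    rcases hyy : s.getLast hsne with _ | _
    · rfl
    · exfalso
      rw [hyy] at hHr
      simp [stepVal] at hHr htake
      omega
  rw [hyval] at hHr hs
  have hHa : H a = 0 := by simp [stepVal] at hHr; omega
  have haD : IsDyck a := by
    rw [isDyck_iff]
    refine ⟨hHa, fun j => ?_⟩
    rcases le_or_gt a.length j with hja | hja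
    · rw [List.take_of_length_le hja, hHa]
    · have h8 := hrpos (j + 1) (by omega) (by omega)
      have h9 : ((true :: s).take (j + 1)) = true :: a.take j := by
        conv_lhs => rw [hs]
        rw [List.take_succ_cons, List.take_append,
          Nat.sub_eq_zero_of_le hja.le, List.take_zero, List.append_nil]
      rw [h9, H_cons] at h8
      simp only [stepVal, if_true] at h8
      linarith
  exact ⟨a, haD, by rw [hs]; rfl⟩

/-- Last-return decomposition of a nonempty Dyck path. -/
theorem exists_lastReturn {p : List Bool} (hp : IsDyck p) (hne : p ≠ []) :
    ∃ q a, IsDyck q ∧ IsDyck a ∧ p = q ++ (true :: a ++ [false]) := by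
  classical
  have hlen : 0 < p.length := List.length_pos_iff.2 hne
  set k := Nat.findGreatest (fun j => H (p.take j) = 0) (p.length - 1) with hkdef
  have hk : H (p.take k) = 0 := by
    rw [hkdef]
    exact Nat.findGreatest_spec (P := fun j => H (p.take j) = 0) (Nat.zero_le _) (by simp)
  have hkle : k ≤ p.length - 1 := Nat.findGreatest_le _
  have hmax : ∀ j, k < j → j ≤ p.length - 1 → H (p.take j) ≠ 0 := by
    intro j h1 h2
    exact Nat.findGreatest_is_greatest (P := fun j => H (p.take j) = 0) h1 h2
  have hkl : k ≤ p.length := by omega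
  obtain ⟨hqD, hrD⟩ := isDyck_take_drop hp hkl hk
  have hrlen : (p.drop k).length = p.length - k := by simp
  have hrpos : ∀ j, 0 < j → j < (p.drop k).length → 0 < H ((p.drop k).take j) := by
    intro j hj hjl
    have h4 : H (p.take (k + j)) = H ((p.drop k).take j) := by
      rw [H_take_decomp p k j hkl, hk, zero_add]
    have h5 : H (p.take (k + j)) ≠ 0 := hmax _ (by omega) (by omega)
    have h6 := dyck_take_nonneg hp (k + j)
    rw [h4] at h5 h6
    omega
  have hr2 : 2 ≤ (p.drop k).length := by
    have h1 : 1 ≤ (p.drop k).length := by omega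
    rcases hll : (p.drop k).length with _ | ⟨_ | n⟩
    · omega
    · exfalso
      obtain ⟨x, hx⟩ := List.length_eq_one_iff.1 hll
      have := dyck_H hrD
      rw [hx] at this
      cases x <;> simp [stepVal] at this
    · omega
  obtain ⟨a, haD, har⟩ := primDyck_eq_UaD hrD hr2 hrpos
  refine ⟨p.take k, a, hqD, haD, ?_⟩
  conv_lhs => rw [← List.take_append_drop k p, har]

/-- Recursive computation of valley levels starting from height `h`. -/
def vls (h : ℤ) : List Bool → List ℤ
  | [] => []
  | [_] => []
  | a :: b :: rest =>
      (if a = false ∧ b = true then [h + stepVal a] else []) ++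
        vls (h + stepVal a) (b :: rest)

lemma vls_aux (p : List Bool) : ∀ h : ℤ,
    ((p.zip p.tail).zip (p.scanl (fun h b => h + stepVal b) h).tail).filterMap
      (fun x => if x.1.1 = false ∧ x.1.2 = true then some x.2 else none) = vls h p := by
  induction p with
  | nil => intro h; rfl
  | cons a q ih =>
    intro h
    cases q with
    | nil => rfl
    | cons b rest =>
      have h1 := ih (h + stepVal a)
      simp only [List.tail_cons] at h1 ⊢
      rw [List.scanl_cons, List.tail_cons, List.zip_cons_cons]
      conv_lhs => rw [show (b :: rest).scanl (fun h b => h + stepVal b) (h + stepVal a) =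
        (h + stepVal a) :: ((b :: rest).scanl (fun h b => h + stepVal b) (h + stepVal a)).tail by
          rw [List.scanl_cons]; rfl]
      rw [List.zip_cons_cons, List.filterMap_cons, h1]
      by_cases hc : a = false ∧ b = true
      · simp only [hc, and_self, if_true, vls]
        simp [hc]
      · simp only [vls, hc, if_false]
        simp [hc]

lemma valleyLevels_eq_vls (p : List Bool) : valleyLevels p = vls 0 p := vls_aux p 0

lemma vls_shift (p : List Bool) : ∀ c h : ℤ, vls (c + h) p = (vls h p).map (c + ·) := by
  induction p with
  | nil => intro c h; rfl
  | cons a q ih =>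
    intro c h
    cases q with
    | nil => rfl
    | cons b rest =>
      simp only [vls]
      rw [List.map_append, add_assoc, ih c (h + stepVal a)]
      congr 1
      by_cases hc : a = false ∧ b = true
      · simp [hc, add_assoc]
      · simp [hc]

lemma vls_append (d : Bool) (r' : List Bool) :
    ∀ (q₂ : List Bool) (x : Bool) (h : ℤ),
    vls h ((x :: q₂) ++ d :: r') =
      vls h (x :: q₂) ++
      ((if (x :: q₂).getLast? = some false ∧ d = true then [h + H (x :: q₂)] else []) ++
      vls (h + H (x :: q₂)) (d :: r')) := by
  intro q₂
  induction q₂ with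
  | nil =>
    intro x h
    simp only [List.cons_append, List.nil_append, vls, List.getLast?_singleton,
      Option.some_inj, H_cons, H_nil, add_zero]
  | cons y q₃ ih =>
    intro x h
    have h1 := ih y (h + stepVal x)
    simp only [List.cons_append] at h1 ⊢
    rw [show vls h (x :: y :: (q₃ ++ d :: r')) =
        (if x = false ∧ y = true then [h + stepVal x] else []) ++
          vls (h + stepVal x) (y :: (q₃ ++ d :: r')) from rfl]
    rw [h1]
    rw [show vls h (x :: y :: q₃) =
        (if x = false ∧ y = true then [h + stepVal x] else []) ++
          vls (h + stepVal x) (y :: q₃) from rfl]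
    have h2 : (x :: y :: q₃).getLast? = (y :: q₃).getLast? := by
      rw [List.getLast?_cons_cons]
    have h3 : H (x :: y :: q₃) = stepVal x + H (y :: q₃) := by simp
    rw [h2, h3, List.append_assoc, add_assoc]

lemma vls_snoc_false (s : List Bool) (h : ℤ) (hs : s ≠ []) :
    vls h (s ++ [false]) = vls h s := by
  rcases s with _ | ⟨x, q⟩
  · simp at hs
  · rw [vls_append false [] q x h]
    simp [vls]

lemma vls_elevate (a : List Bool) (h : ℤ) :
    vls h (true :: a ++ [false]) = vls (h + 1) a := by
  rcases a with _ | ⟨c, a'⟩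
  · simp [vls, stepVal]
  · rw [show (true :: (c :: a') ++ [false]) = true :: ((c :: a') ++ [false]) from rfl]
    rw [show vls h (true :: ((c :: a') ++ [false])) =
        (if true = false ∧ ((c :: a') ++ [false]).head (by simp) = true then [h + stepVal true]
          else []) ++ vls (h + stepVal true) ((c :: a') ++ [false]) from by
      simp only [List.cons_append]; rfl]
    rw [vls_snoc_false _ _ (by simp)]
    simp [stepVal]

lemma vls_replicate (n : ℕ) (c : Bool) (h : ℤ) : vls h (List.replicate n c) = [] := by
  induction n generalizing h with
  | zero => rfl
  | succ n ih =>
    cases n with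
    | zero => rfl
    | succ m =>
      rw [List.replicate_succ, List.replicate_succ]
      rw [show vls h (c :: c :: List.replicate m c) =
        (if c = false ∧ c = true then [h + stepVal c] else []) ++
          vls (h + stepVal c) (c :: List.replicate m c) from rfl]
      rw [← List.replicate_succ, ih]
      rcases c with _ | _ <;> simp

lemma vls_pyr (a : ℕ) (h : ℤ) : vls h (pyr a) = [] := by
  rcases a with _ | n
  · rfl
  · unfold pyr
    rw [List.replicate_succ,
      show List.replicate (n+1) false = false :: List.replicate n false from rfl,
      vls_append false (List.replicate n false) (List.replicate n true) true h]
    rw [show true :: List.replicate n true = List.replicate (n+1) true from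
      (List.replicate_succ (a := true) (n := n)).symm]
    rw [show false :: List.replicate n false = List.replicate (n+1) false from
      (List.replicate_succ (a := false) (n := n)).symm]
    rw [vls_replicate, vls_replicate]
    simp

lemma valley_nonneg {p : List Bool} (hp : IsDyck p) : ∀ v ∈ valleyLevels p, 0 ≤ v := by
  intro v hv
  unfold valleyLevels at hv
  obtain ⟨⟨⟨c, d⟩, w⟩, hx, hxv⟩ := List.mem_filterMap.1 hv
  by_cases hc : c = false ∧ d = true
  · simp only [hc, and_self, if_true, Option.some_inj] at hxv
    subst hxv
    exact hp.2 _ (List.mem_of_mem_tail (List.of_mem_zip hx).2)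
  · simp [hc] at hxv

lemma dyck_getLast?_false {q : List Bool} (hq : IsDyck q) (hne : q ≠ []) :
    q.getLast? = some false := by
  have hlen : 0 < q.length := List.length_pos_iff.2 hne
  have hs : q.dropLast ++ [q.getLast hne] = q := List.dropLast_append_getLast hne
  have hH : H q.dropLast + stepVal (q.getLast hne) = 0 := by
    have := dyck_H hq
    conv_lhs at this => rw [← hs]
    simpa using this
  have hnn : 0 ≤ H q.dropLast := by
    have h1 := dyck_take_nonneg hq (q.length - 1)
    rwa [← List.dropLast_eq_take] at h1
  have : q.getLast hne = false := by
    rcases hg : q.getLast hne with _ | _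
    · rfl
    · exfalso; rw [hg] at hH; simp [stepVal] at hH; omega
  rw [List.getLast?_eq_getLast hne, this]

lemma vls_glue2 {q : List Bool} (a : List Bool) (hq : IsDyck q) (hne : q ≠ []) :
    vls 0 (q ++ (true :: a ++ [false])) =
      vls 0 q ++ [0] ++ (vls 0 a).map (1 + ·) := by
  rcases q with _ | ⟨x, q₂⟩
  · simp at hne
  have key := vls_append true (a ++ [false]) q₂ x 0
  rw [dyck_getLast?_false hq (by simp), dyck_H hq] at key
  simp only [and_self, if_true, add_zero, zero_add, Option.some.injEq, eq_self_iff_true,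
    and_true] at key
  have e1 : vls 0 (true :: (a ++ [false])) = (vls 0 a).map (1 + ·) := by
    have e2 : vls 0 (true :: a ++ [false]) = vls (0 + 1 : ℤ) a := vls_elevate a 0
    have e3 : vls (0 + 1 : ℤ) a = (vls 0 a).map (1 + ·) := by
      rw [show (0 + 1 : ℤ) = 1 + 0 by norm_num, vls_shift]
    exact e2.trans e3
  rw [List.append_assoc, ← e1]
  exact key

lemma vls_glue1 {q : List Bool} {m : ℕ} (hm : 0 < m) (hq : IsDyck q) (hne : q ≠ []) :
    vls 0 (q ++ pyr m) = vls 0 q ++ [0] := by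
  rcases q with _ | ⟨x, q₂⟩
  · simp at hne
  obtain ⟨m', rfl⟩ : ∃ m', m = m' + 1 := ⟨m - 1, by omega⟩
  have key := vls_append true
    (List.replicate m' true ++ List.replicate (m' + 1) false) q₂ x 0
  rw [dyck_getLast?_false hq (by simp), dyck_H hq] at key
  simp only [and_self, if_true, add_zero, zero_add, Option.some.injEq, eq_self_iff_true,
    and_true] at key
  have e1 : vls 0 (true :: (List.replicate m' true ++ List.replicate (m' + 1) false))
      = ([] : List ℤ) := vls_pyr (m' + 1) 0
  rw [e1, List.append_nil] at key
  exact key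

lemma eq_rep_of_vls_nil (p : List Bool) : ∀ h, vls h p = [] →
    ∃ s t, p = List.replicate s true ++ List.replicate t false := by
  induction p with
  | nil => exact fun h _ => ⟨0, 0, rfl⟩
  | cons a q ih =>
    intro h hv
    cases q with
    | nil =>
      rcases a with _ | _
      · exact ⟨0, 1, rfl⟩
      · exact ⟨1, 0, rfl⟩
    | cons b rest =>
      rw [show vls h (a :: b :: rest) =
        (if a = false ∧ b = true then [h + stepVal a] else []) ++
          vls (h + stepVal a) (b :: rest) from rfl] at hv
      rw [List.append_eq_nil_iff] at hv
      obtain ⟨s, t, hst⟩ := ih (h + stepVal a) hv.2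
      have hcond : ¬(a = false ∧ b = true) := by
        intro hc
        rw [if_pos hc] at hv
        exact absurd hv.1 (by simp)
      rcases a with _ | _
      · -- a = false: then b = false, hence s = 0
        have hb : b = false := by
          rcases b with _ | _
          · rfl
          · exact absurd ⟨rfl, rfl⟩ hcond
        subst hb
        have hs0 : s = 0 := by
          rcases s with _ | s'
          · rfl
          · exfalso
            rw [List.replicate_succ] at hst
            simp at hst
        subst hs0
        rw [List.replicate_zero, List.nil_append] at hst
        refine ⟨0, t + 1, ?_⟩
        rw [List.replicate_zero, List.nil_append, List.replicate_succ, hst]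
      · exact ⟨s + 1, t, by rw [List.replicate_succ, hst]; rfl⟩

lemma count_add_count (p : List Bool) : p.count true + p.count false = p.length := by
  induction p with
  | nil => rfl
  | cons a q ih => cases a <;> simp [List.count_cons] <;> omega

lemma eq_pyr_of_vls_nil {p : List Bool} (hp : IsDyck p) (hv : vls 0 p = []) :
    p = pyr (semilength p) := by
  obtain ⟨s, t, rfl⟩ := eq_rep_of_vls_nil p 0 hv
  have hst : s = t := by
    have := hp.1
    simpa [List.count_replicate] using this
  subst hst
  have hsl : semilength (List.replicate s true ++ List.replicate s false) = s := by
    simp [semilength, List.count_replicate]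
  rw [hsl]
  rfl

@[simp] lemma semilength_append (p q : List Bool) :
    semilength (p ++ q) = semilength p + semilength q := by
  simp [semilength]

@[simp] lemma semilength_pyr (m : ℕ) : semilength (pyr m) = m := by
  simp [semilength, pyr, List.count_replicate]

@[simp] lemma semilength_UaD (a : List Bool) :
    semilength (true :: a ++ [false]) = semilength a + 1 := by
  simp [semilength, List.count_cons]

lemma length_eq_two_mul {p : List Bool} (hp : IsDyck p) :
    p.length = 2 * semilength p := by
  have h1 := count_add_count p
  have h2 := hp.1
  unfold semilength
  omega

@[simp] lemma semilength_nil : semilength [] = 0 := rfl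

@[simp] lemma semilength_cons_true (l : List Bool) :
    semilength (true :: l) = semilength l + 1 := by
  simp [semilength, List.count_cons]

@[simp] lemma semilength_cons_false (l : List Bool) :
    semilength (false :: l) = semilength l := by
  simp [semilength, List.count_cons]

lemma valleyLevels_UaD (a : List Bool) :
    valleyLevels (true :: a ++ [false]) = (valleyLevels a).map (1 + ·) := by
  rw [valleyLevels_eq_vls, valleyLevels_eq_vls]
  have e2 : vls 0 (true :: a ++ [false]) = vls (0 + 1 : ℤ) a := vls_elevate a 0
  rw [e2, show (0 + 1 : ℤ) = 1 + 0 by norm_num, vls_shift]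

lemma valleyLevels_pyr (m : ℕ) : valleyLevels (pyr m) = [] := by
  rw [valleyLevels_eq_vls, vls_pyr]

lemma valleyLevels_glue2 {q : List Bool} (a : List Bool) (hq : IsDyck q) (hne : q ≠ []) :
    valleyLevels (q ++ (true :: a ++ [false])) =
      valleyLevels q ++ [0] ++ (valleyLevels a).map (1 + ·) := by
  rw [valleyLevels_eq_vls, valleyLevels_eq_vls, valleyLevels_eq_vls]
  exact vls_glue2 a hq hne

lemma valleyLevels_glue1 {q : List Bool} {m : ℕ} (hm : 0 < m) (hq : IsDyck q) (hne : q ≠ []) :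
    valleyLevels (q ++ pyr m) = valleyLevels q ++ [0] := by
  rw [valleyLevels_eq_vls, valleyLevels_eq_vls]
  exact vls_glue1 hm hq hne

/-- `(-1)`-Dyck paths with no valley or last valley at level at most 1. -/
def TPred (p : List Bool) : Prop :=
  IsDyck p ∧ RestrictedD (-1) p ∧ ∀ v ∈ (valleyLevels p).getLast?, v ≤ 1

/-- `(-1)`-Dyck paths with no valley or last valley at ground level. -/
def BPred (p : List Bool) : Prop :=
  IsDyck p ∧ RestrictedD (-1) p ∧ NoValleyOrLastGround p

lemma nvlg_iff (p : List Bool) :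
    NoValleyOrLastGround p ↔ ∀ v ∈ (valleyLevels p).getLast?, v = 0 := by
  unfold NoValleyOrLastGround
  rcases hv : (valleyLevels p).getLast? with _ | w
  · simp [List.getLast?_eq_none_iff.1 hv]
  · have : valleyLevels p ≠ [] := by
      intro h; rw [h] at hv; simp at hv
    simp [this, Option.mem_def]

lemma TPred_nil : TPred [] := by
  refine ⟨⟨rfl, ?_⟩, ?_, ?_⟩
  · intro h hh
    simp [heights] at hh
    omega
  · unfold RestrictedD valleyLevels
    simp
    exact List.isChain_nil
  · unfold valleyLevels
    simp

lemma chain'_glue2_iff {q a : List Bool} (hq : IsDyck q) (ha : IsDyck a) (hne : q ≠ []) :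
    (RestrictedD (-1) (q ++ (true :: a ++ [false])) ∧
      ∀ v ∈ (valleyLevels (q ++ (true :: a ++ [false]))).getLast?, v ≤ 1) ↔
    ((RestrictedD (-1) q ∧ ∀ v ∈ (valleyLevels q).getLast?, v ≤ 1) ∧
     (RestrictedD (-1) a ∧ ∀ v ∈ (valleyLevels a).getLast?, v = 0)) := by
  have hva := valley_nonneg ha
  unfold RestrictedD List.Chain'
  rw [valleyLevels_glue2 a hq hne]
  rw [List.append_assoc]
  rw [List.isChain_append]
  rw [List.isChain_append (l₁ := [(0 : ℤ)])]
  rw [List.isChain_map]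
  rw [List.getLast?_append_of_ne_nil _ (by simp : ([0] ++ (valleyLevels a).map (1 + ·)) ≠ [])]
  constructor
  · rintro ⟨⟨hcq, ⟨_, hcam, hj2⟩, hj1⟩, hlast⟩
    refine ⟨⟨hcq, ?_⟩, ⟨hcam.imp (fun a b h => by linarith), ?_⟩⟩
    · intro v hv
      have := hj1 v hv 0 (by simp)
      linarith
    · intro v hv
      rcases hva2 : (valleyLevels a).getLast? with _ | w
      · rw [hva2] at hv; simp at hv
      rw [hva2] at hv
      replace hv : w = v := by simpa using hv
      have hvala : valleyLevels a ≠ [] := by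
        intro h; rw [h] at hva2; simp at hva2
      have hmapne : (valleyLevels a).map (1 + ·) ≠ [] := by simpa using hvala
      have hl := hlast (1 + w) (by
        rw [List.getLast?_append_of_ne_nil _ hmapne, List.getLast?_map, hva2]; rfl)
      have h0 : 0 ≤ w := hva w (List.mem_of_mem_getLast? hva2)
      omega
  · rintro ⟨⟨hcq, hlq⟩, hca, hla⟩
    refine ⟨⟨hcq, ⟨by simp, hca.imp (fun a b h => by linarith), ?_⟩, ?_⟩, ?_⟩
    · intro x hx y hy
      simp at hx
      subst hx
      rw [List.head?_map] at hy
      rcases hh : (valleyLevels a).head? with _ | w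
      · rw [hh] at hy; simp at hy
      · rw [hh] at hy
        simp at hy
        subst hy
        have : 0 ≤ w := hva w (List.mem_of_mem_head? hh)
        simp
        linarith
    · intro x hx y hy
      simp at hy
      subst hy
      have := hlq x hx
      linarith
    · intro v hv
      rcases hva2 : (valleyLevels a).getLast? with _ | w
      · have hmapnil : (valleyLevels a).map (1 + ·) = [] := by
          simp [List.getLast?_eq_none_iff.1 hva2]
        rw [hmapnil] at hv
        simp at hv
        omega
      · have hvala : valleyLevels a ≠ [] := by
          intro h; rw [h] at hva2; simp at hva2
        have hmapne : (valleyLevels a).map (1 + ·) ≠ [] := by simpa using hvala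
        rw [List.getLast?_append_of_ne_nil _ hmapne, List.getLast?_map, hva2] at hv
        simp at hv
        have := hla w (by rw [hva2]; rfl)
        omega

lemma TPred_glue2_iff {q a : List Bool} (hq : IsDyck q) (ha : IsDyck a) :
    TPred (q ++ (true :: a ++ [false])) ↔ TPred q ∧ BPred a := by
  have hD : IsDyck (q ++ (true :: a ++ [false])) := isDyck_append hq (isDyck_UaD ha)
  have hva := valley_nonneg ha
  rcases eq_or_ne q [] with rfl | hne
  · rw [List.nil_append]
    unfold TPred BPred
    rw [nvlg_iff]
    constructor
    · rintro ⟨_, hc, hl⟩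
      unfold RestrictedD List.Chain' at hc ⊢
      rw [valleyLevels_UaD, List.isChain_map] at hc
      rw [valleyLevels_UaD, List.getLast?_map] at hl
      refine ⟨TPred_nil, ha, hc.imp (fun a b h => by simpa using by linarith), ?_⟩
      intro v hv
      have h1 := hl (1 + v) (by rw [hv]; rfl)
      have h2 := hva v (List.mem_of_mem_getLast? hv)
      omega
    · rintro ⟨_, _, h3, h4⟩
      refine ⟨isDyck_UaD ha, ?_, ?_⟩
      · unfold RestrictedD List.Chain'
        rw [valleyLevels_UaD, List.isChain_map]
        exact h3.imp (fun a b h => by linarith)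
      · intro v hv
        rw [valleyLevels_UaD, List.getLast?_map] at hv
        rcases hh : (valleyLevels a).getLast? with _ | w
        · rw [hh] at hv; simp at hv
        · rw [hh] at hv
          replace hv : 1 + w = v := by simpa using hv
          have := h4 w (by rw [hh]; rfl)
          omega
  · unfold TPred BPred
    rw [nvlg_iff]
    have hiff := chain'_glue2_iff hq ha hne
    constructor
    · rintro ⟨_, hc, hl⟩
      obtain ⟨⟨h1, h2⟩, h3, h4⟩ := hiff.1 ⟨hc, hl⟩
      exact ⟨⟨hq, h1, h2⟩, ⟨ha, h3, h4⟩⟩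
    · rintro ⟨⟨_, h1, h2⟩, ⟨_, h3, h4⟩⟩
      obtain ⟨hc, hl⟩ := hiff.2 ⟨⟨h1, h2⟩, ⟨h3, h4⟩⟩
      exact ⟨hD, hc, hl⟩

lemma BPred_pyr (m : ℕ) : BPred (pyr m) := by
  refine ⟨isDyck_pyr m, ?_, Or.inl (valleyLevels_pyr m)⟩
  unfold RestrictedD
  rw [valleyLevels_pyr]
  exact List.isChain_nil

lemma BPred_glue1_iff {q : List Bool} {m : ℕ} (hq : IsDyck q) (hm : 0 < m) :
    BPred (q ++ pyr m) ↔ TPred q := by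
  rcases eq_or_ne q [] with rfl | hne
  · rw [List.nil_append]
    exact ⟨fun _ => TPred_nil, fun _ => BPred_pyr m⟩
  · have hD : IsDyck (q ++ pyr m) := isDyck_append hq (isDyck_pyr m)
    unfold TPred BPred
    rw [nvlg_iff]
    unfold RestrictedD List.Chain'
    rw [valleyLevels_glue1 hm hq hne, List.isChain_append]
    have hlast : (valleyLevels q ++ [0]).getLast? = some 0 :=
      List.getLast?_append_of_ne_nil _ (by simp)
    constructor
    · rintro ⟨_, ⟨hc, _, hj⟩, _⟩
      refine ⟨hq, hc, fun v hv => ?_⟩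
      have := hj v hv 0 (by simp)
      linarith
    · rintro ⟨_, hc, hl⟩
      refine ⟨hD, ⟨hc, by simp, fun x hx y hy => ?_⟩, fun v hv => ?_⟩
      · replace hy : 0 = y := by simpa using hy
        have := hl x hx
        omega
      · rw [hlast] at hv
        replace hv : 0 = v := by simpa using hv
        omega

lemma semilength_pos_ne_nil {p : List Bool} (h : 0 < semilength p) : p ≠ [] := by
  intro hp; rw [hp] at h; simp [semilength] at h

lemma UaD_pyr (s : ℕ) : (true :: pyr s ++ [false]) = pyr (s + 1) := by
  unfold pyr
  have h1 : List.replicate (s + 1) false = List.replicate s false ++ [false] := by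
    rw [List.replicate_succ']
  rw [List.replicate_succ, h1]
  simp [List.append_assoc]

/-- Structure theorem for nonempty `T`-paths. -/
theorem TPred_decomp {p : List Bool} (hp : TPred p) (hne : p ≠ []) :
    ∃ q a, TPred q ∧ BPred a ∧ p = q ++ (true :: a ++ [false]) := by
  obtain ⟨q, a, hqD, haD, rfl⟩ := exists_lastReturn hp.1 hne
  obtain ⟨h1, h2⟩ := (TPred_glue2_iff hqD haD).1 hp
  exact ⟨q, a, h1, h2, rfl⟩

/-- Structure theorem for nonempty `B`-paths. -/
theorem BPred_decomp {p : List Bool} (hp : BPred p) (hne : p ≠ []) :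
    ∃ q m, TPred q ∧ 0 < m ∧ p = q ++ pyr m := by
  obtain ⟨q, a, hqD, haD, rfl⟩ := exists_lastReturn hp.1 hne
  have hva : valleyLevels a = [] := by
    have hva0 := valley_nonneg haD
    have hnv := hp.2.2
    rw [nvlg_iff] at hnv
    by_contra hvane
    obtain ⟨w, hw⟩ := Option.ne_none_iff_exists'.1
      (fun h => hvane (List.getLast?_eq_none_iff.1 h))
    have hw0 : 0 ≤ w := hva0 w (List.mem_of_mem_getLast? hw)
    have hmapne : (valleyLevels a).map (1 + ·) ≠ [] := by
      intro h
      exact hvane (by simpa using h)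
    rcases eq_or_ne q [] with rfl | hqne
    · rw [List.nil_append] at hnv
      have := hnv (1 + w) (by
        rw [valleyLevels_UaD, List.getLast?_map, hw]; rfl)
      omega
    · have := hnv (1 + w) (by
        rw [valleyLevels_glue2 a hqD hqne, List.append_assoc,
          List.getLast?_append_of_ne_nil _ (by simp : ([0] ++ (valleyLevels a).map (1 + ·)) ≠ []),
          List.getLast?_append_of_ne_nil _ hmapne, List.getLast?_map, hw]
        rfl)
      omega
  have hapyr : a = pyr (semilength a) :=
    eq_pyr_of_vls_nil haD (by rw [← valleyLevels_eq_vls]; exact hva)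
  refine ⟨q, semilength a + 1, ?_, Nat.succ_pos _, ?_⟩
  · exact (BPred_glue1_iff hqD (Nat.succ_pos _)).1 (by
      rw [← UaD_pyr, ← hapyr]; exact hp)
  · rw [← UaD_pyr, ← hapyr]

lemma glue2_inj {q q' a a' : List Bool} (hq : IsDyck q) (hq' : IsDyck q')
    (ha : IsDyck a) (ha' : IsDyck a')
    (h : q ++ (true :: a ++ [false]) = q' ++ (true :: a' ++ [false])) :
    q = q' ∧ a = a' := by
  obtain ⟨h1, h2⟩ := unique_split h (dyck_H hq) (dyck_H hq') (prim_UaD ha) (prim_UaD ha')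
  refine ⟨h1, ?_⟩
  have h3 := List.append_cancel_right h2
  exact List.tail_eq_of_cons_eq h3

lemma glue1_inj {q q' : List Bool} {m m' : ℕ} (hq : IsDyck q) (hq' : IsDyck q')
    (hm : 0 < m) (hm' : 0 < m')
    (h : q ++ pyr m = q' ++ pyr m') : q = q' ∧ m = m' := by
  obtain ⟨h1, h2⟩ := unique_split h (dyck_H hq) (dyck_H hq') (prim_pyr hm) (prim_pyr hm')
  refine ⟨h1, ?_⟩
  have := congrArg List.length h2
  simp only [length_pyr] at this
  omega

open Finset

attribute [local instance] Classical.propDecidable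

/-- All Boolean lists of length `2n`. -/
noncomputable def allP (n : ℕ) : Finset (List Bool) :=
  (Finset.univ : Finset (Fin (2 * n) → Bool)).image (fun f => List.ofFn f)

lemma mem_allP {n : ℕ} {p : List Bool} : p ∈ allP n ↔ p.length = 2 * n := by
  unfold allP
  simp only [Finset.mem_image, Finset.mem_univ, true_and]
  constructor
  · rintro ⟨f, rfl⟩; simp
  · intro h
    refine ⟨fun i => p.get (Fin.cast h.symm i), ?_⟩
    apply List.ext_get
    · simp [h]
    · intro i h1 h2
      simp

noncomputable def tF (n : ℕ) : Finset (List Bool) :=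
  (allP n).filter (fun p => TPred p ∧ semilength p = n)

noncomputable def bF (n : ℕ) : Finset (List Bool) :=
  (allP n).filter (fun p => BPred p ∧ semilength p = n)

lemma mem_tF {n : ℕ} {p : List Bool} : p ∈ tF n ↔ TPred p ∧ semilength p = n := by
  unfold tF
  rw [Finset.mem_filter, mem_allP]
  constructor
  · tauto
  · rintro ⟨h1, h2⟩
    exact ⟨by rw [length_eq_two_mul h1.1, h2], h1, h2⟩

lemma mem_bF {n : ℕ} {p : List Bool} : p ∈ bF n ↔ BPred p ∧ semilength p = n := by
  unfold bF
  rw [Finset.mem_filter, mem_allP]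
  constructor
  · tauto
  · rintro ⟨h1, h2⟩
    exact ⟨by rw [length_eq_two_mul h1.1, h2], h1, h2⟩

lemma BPred_nil : BPred [] := ⟨TPred_nil.1, TPred_nil.2.1, Or.inl (by unfold valleyLevels; simp)⟩

lemma tF_zero : tF 0 = {[]} := by
  ext p
  rw [mem_tF, Finset.mem_singleton]
  constructor
  · rintro ⟨h1, h2⟩
    have := length_eq_two_mul h1.1
    rw [h2] at this
    exact List.length_eq_zero_iff.1 (by omega)
  · rintro rfl
    exact ⟨TPred_nil, rfl⟩

lemma bF_zero : bF 0 = {[]} := by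
  ext p
  rw [mem_bF, Finset.mem_singleton]
  constructor
  · rintro ⟨h1, h2⟩
    have := length_eq_two_mul h1.1
    rw [h2] at this
    exact List.length_eq_zero_iff.1 (by omega)
  · rintro rfl
    exact ⟨BPred_nil, rfl⟩

lemma tF_succ_eq (n : ℕ) :
    tF (n + 1) = (antidiagonal n).biUnion (fun ij =>
      ((tF ij.1) ×ˢ (bF ij.2)).image (fun qa => qa.1 ++ (true :: qa.2 ++ [false]))) := by
  ext p
  rw [mem_tF, Finset.mem_biUnion]
  constructor
  · rintro ⟨h1, h2⟩
    obtain ⟨q, a, hq, ha, rfl⟩ := TPred_decomp h1 (semilength_pos_ne_nil (by omega))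
    have hsl : semilength q + semilength a + 1 = n + 1 := by
      rw [← h2]
      simp
      omega
    refine ⟨(semilength q, semilength a), ?_, ?_⟩
    · rw [Finset.HasAntidiagonal.mem_antidiagonal]; omega
    · rw [Finset.mem_image]
      exact ⟨(q, a), by rw [Finset.mem_product, mem_tF, mem_bF]; exact ⟨⟨hq, rfl⟩, ha, rfl⟩, rfl⟩
  · rintro ⟨⟨i, j⟩, hij, hmem⟩
    rw [Finset.HasAntidiagonal.mem_antidiagonal] at hij
    rw [Finset.mem_image] at hmem
    obtain ⟨⟨q, a⟩, hqa, rfl⟩ := hmem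
    rw [Finset.mem_product, mem_tF, mem_bF] at hqa
    dsimp only at hqa
    obtain ⟨⟨hq, hqs⟩, ha, has⟩ := hqa
    refine ⟨(TPred_glue2_iff hq.1 ha.1).2 ⟨hq, ha⟩, ?_⟩
    simp [hqs, has]
    omega

lemma bF_succ_eq (n : ℕ) :
    bF (n + 1) = (Finset.range (n + 1)).biUnion (fun k =>
      (tF k).image (fun q => q ++ pyr (n + 1 - k))) := by
  ext p
  rw [mem_bF, Finset.mem_biUnion]
  constructor
  · rintro ⟨h1, h2⟩
    obtain ⟨q, m, hq, hm, rfl⟩ := BPred_decomp h1 (semilength_pos_ne_nil (by omega))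
    have hsl : semilength q + m = n + 1 := by
      rw [← h2]; simp
    refine ⟨semilength q, by rw [Finset.mem_range]; omega, ?_⟩
    rw [Finset.mem_image]
    refine ⟨q, by rw [mem_tF]; exact ⟨hq, rfl⟩, ?_⟩
    have : n + 1 - semilength q = m := by omega
    rw [this]
  · rintro ⟨k, hk, hmem⟩
    rw [Finset.mem_range] at hk
    rw [Finset.mem_image] at hmem
    obtain ⟨q, hq, rfl⟩ := hmem
    rw [mem_tF] at hq
    refine ⟨(BPred_glue1_iff hq.1.1 (by omega)).2 hq.1, ?_⟩
    simp [hq.2]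
    omega

lemma tF_card_succ (n : ℕ) :
    (tF (n + 1)).card = ∑ ij ∈ antidiagonal n, (tF ij.1).card * (bF ij.2).card := by
  rw [tF_succ_eq, Finset.card_biUnion]
  · apply Finset.sum_congr rfl
    intro ij _
    rw [Finset.card_image_of_injOn, Finset.card_product]
    rintro ⟨q, a⟩ hqa ⟨q', a'⟩ hqa' heq
    rw [Finset.mem_coe, Finset.mem_product, mem_tF, mem_bF] at hqa hqa'
    dsimp only at hqa hqa'
    obtain ⟨h1, h2⟩ := glue2_inj hqa.1.1.1 hqa'.1.1.1 hqa.2.1.1 hqa'.2.1.1 heq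
    simp only [Prod.mk.injEq]
    exact ⟨h1, h2⟩
  · rintro ⟨i, j⟩ hij ⟨i', j'⟩ hij' hne
    rw [Function.onFun, Finset.disjoint_left]
    rintro p hp hp'
    rw [Finset.mem_image] at hp hp'
    obtain ⟨⟨q, a⟩, hqa, heq⟩ := hp
    obtain ⟨⟨q', a'⟩, hqa', heq'⟩ := hp'
    rw [Finset.mem_product, mem_tF, mem_bF] at hqa hqa'
    dsimp only at hqa hqa' heq heq'
    obtain ⟨hg1, hg2⟩ :=
      glue2_inj hqa.1.1.1 hqa'.1.1.1 hqa.2.1.1 hqa'.2.1.1 (heq.trans heq'.symm)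
    apply hne
    have e1 : i = i' := by rw [← hqa.1.2, ← hqa'.1.2, hg1]
    have e2 : j = j' := by rw [← hqa.2.2, ← hqa'.2.2, hg2]
    simp [e1, e2]

lemma bF_card_succ (n : ℕ) :
    (bF (n + 1)).card = ∑ k ∈ Finset.range (n + 1), (tF k).card := by
  rw [bF_succ_eq, Finset.card_biUnion]
  · apply Finset.sum_congr rfl
    intro k hk
    rw [Finset.mem_range] at hk
    rw [Finset.card_image_of_injOn]
    intro q hq q' hq' heq
    rw [Finset.mem_coe, mem_tF] at hq hq'
    exact (glue1_inj hq.1.1 hq'.1.1 (by omega) (by omega) heq).1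
  · intro k hk k' hk' hne
    rw [Finset.mem_coe, Finset.mem_range] at hk hk'
    rw [Function.onFun, Finset.disjoint_left]
    rintro p hp hp'
    rw [Finset.mem_image] at hp hp'
    obtain ⟨q, hq, heq⟩ := hp
    obtain ⟨q', hq', heq'⟩ := hp'
    rw [mem_tF] at hq hq'
    obtain ⟨hg1, hg2⟩ :=
      glue1_inj hq.1.1 hq'.1.1 (by omega) (by omega) (heq.trans heq'.symm)
    exact hne (by omega)

lemma bCount_eq_card (n : ℕ) : bCount n = (bF n).card := by
  unfold bCount
  have hset : {p : List Bool | IsDyck p ∧ semilength p = n ∧ RestrictedD (-1) p ∧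
      NoValleyOrLastGround p} = ↑(bF n) := by
    ext p
    rw [Set.mem_setOf_eq, Finset.mem_coe, mem_bF]
    unfold BPred
    tauto
  rw [hset, Set.ncard_coe_finset]

end DyckProof

open PowerSeries

/-- The generating function `B(x) = Σ_n b(n) x^n`. -/
noncomputable def Bgf : PowerSeries ℚ := PowerSeries.mk fun n => (bCount n : ℚ)

namespace DyckProof

/-- The generating function of the auxiliary counts `t(n)`. -/
noncomputable def Tgf : PowerSeries ℚ := PowerSeries.mk fun n => ((tF n).card : ℚ)

lemma coeff_Bgf (n : ℕ) : (PowerSeries.coeff n) Bgf = ((bF n).card : ℚ) := by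
  rw [Bgf, PowerSeries.coeff_mk, bCount_eq_card]

lemma coeff_Tgf (n : ℕ) : (PowerSeries.coeff n) Tgf = ((tF n).card : ℚ) := by
  rw [Tgf, PowerSeries.coeff_mk]

lemma Tgf_eq : Tgf = 1 + X * (Tgf * Bgf) := by
  ext n
  rcases n with _ | m
  · rw [coeff_Tgf, tF_zero]
    simp
  · rw [coeff_Tgf, map_add, PowerSeries.coeff_succ_X_mul, PowerSeries.coeff_one,
      PowerSeries.coeff_mul, tF_card_succ]
    rw [if_neg (Nat.succ_ne_zero m), zero_add]
    push_cast
    apply Finset.sum_congr rfl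
    intro ij _
    rw [coeff_Tgf, coeff_Bgf]

lemma Bgf_eq : Bgf = 1 - X + X * Tgf + X * Bgf := by
  ext n
  rcases n with _ | m
  · rw [coeff_Bgf, bF_zero]
    simp
  · rw [coeff_Bgf, map_add, map_add, map_sub, PowerSeries.coeff_succ_X_mul,
      PowerSeries.coeff_succ_X_mul, PowerSeries.coeff_one, PowerSeries.coeff_X,
      coeff_Tgf, coeff_Bgf, bF_card_succ, if_neg (Nat.succ_ne_zero m)]
    rcases m with _ | k
    · rw [bF_zero]
      simp [tF_zero]
    · rw [bF_card_succ k, Finset.sum_range_succ]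
      push_cast
      simp
      ring
end DyckProof

/-- `Σ_{n≥0} b(n) x^n = (1 - x² - √(1-4x+2x²+x⁴)) / (2x(1-x))`, stated as the
squared (algebraic) identity `(1 - x² - 2x(1-x)B(x))² = 1 - 4x + 2x² + x⁴`
in `ℚ[[x]]`. -/
theorem Bgf_algebraic_equation :
    ((1 : PowerSeries ℚ) - X ^ 2 - 2 * X * (1 - X) * Bgf) ^ 2 =
      1 - 4 * X + 2 * X ^ 2 + X ^ 4 := by
  have e1 := DyckProof.Bgf_eq
  have e2 := DyckProof.Tgf_eq
  linear_combination (-4 * X * (1 - X) * (1 - X * Bgf)) * e1 +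
    (-4 * X ^ 2 * (1 - X)) * e2
end
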